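/- arXiv:2412.03236 — 10 statements merged into one kernel-verified Lean document; each statement's English description precedes it below -/
import Mathlib

section
/- For any quilt f of type (P,Q) with rank P ≥ rank Q, we have f(1̂_P, y) = rank(y) for all y ∈ Q. Symmetrically, if rank P ≤ rank Q, then f(x, 1̂_Q) = rank(x) for all x ∈ P. -/
/-- A quilt of alternating sign matrices of type `(P, Q)`, with respect to given rank
functions `rkP`, `rkQ`: a map `f : P × Q → ℕ` vanishing when either coordinate is the
least element, taking the value `min (rank P) (rank Q)` at `(⊤, ⊤)`, and satisfying
Boolean growth along each cover relation of the product poset `P × Q`. -/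
def IsQuilt {P Q : Type*} [PartialOrder P] [BoundedOrder P] [PartialOrder Q] [BoundedOrder Q]
    (rkP : P → ℕ) (rkQ : Q → ℕ) (f : P → Q → ℕ) : Prop :=
  (∀ y, f ⊥ y = 0) ∧
  (∀ x, f x ⊥ = 0) ∧
  f ⊤ ⊤ = min (rkP ⊤) (rkQ ⊤) ∧
  (∀ a b : P × Q, a ⋖ b → f b.1 b.2 = f a.1 a.2 ∨ f b.1 b.2 = f a.1 a.2 + 1)

/-- Auxiliary: if `rk` increases by exactly 1 along covers and `g` increases by 0 or 1
along covers, then for `y ≤ z` we have `g y ≤ g z` and `g z + rk y ≤ g y + rk z`. -/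
lemma quilt_aux {Q : Type*} [Finite Q] [PartialOrder Q] (rk g : Q → ℕ)
    (hrk : ∀ a b : Q, a ⋖ b → rk b = rk a + 1)
    (hg : ∀ a b : Q, a ⋖ b → g b = g a ∨ g b = g a + 1) :
    ∀ z y : Q, y ≤ z → g y ≤ g z ∧ g z + rk y ≤ g y + rk z := by
  have : WellFoundedLT Q := Finite.to_wellFoundedLT
  intro z
  induction z using WellFoundedLT.induction with
  | ind z ih =>
    intro y hyz
    rcases eq_or_lt_of_le hyz with rfl | hlt
    · omega
    · obtain ⟨c, hyc, hcz⟩ := exists_le_covBy_of_lt hlt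
      obtain ⟨h1, h2⟩ := ih c hcz.lt y hyc
      have h3 := hrk c z hcz
      have h4 := hg c z hcz
      omega

/-- For any quilt `f` of type `(P, Q)`: if `rank P ≥ rank Q` then `f(⊤_P, y) = rank y`
for all `y ∈ Q`, and if `rank P ≤ rank Q` then `f(x, ⊤_Q) = rank x` for all `x ∈ P`. -/
theorem quilt_top_values
    {P Q : Type*} [Fintype P] [PartialOrder P] [BoundedOrder P]
    [Fintype Q] [PartialOrder Q] [BoundedOrder Q]
    (rkP : P → ℕ) (rkQ : Q → ℕ)
    (hP0 : rkP ⊥ = 0) (hPcov : ∀ x y : P, x ⋖ y → rkP y = rkP x + 1)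
    (hQ0 : rkQ ⊥ = 0) (hQcov : ∀ x y : Q, x ⋖ y → rkQ y = rkQ x + 1)
    (f : P → Q → ℕ) (hf : IsQuilt rkP rkQ f) :
    (rkQ ⊤ ≤ rkP ⊤ → ∀ y : Q, f ⊤ y = rkQ y) ∧
    (rkP ⊤ ≤ rkQ ⊤ → ∀ x : P, f x ⊤ = rkP x) := by
  obtain ⟨hbot1, hbot2, htop, hcov⟩ := hf
  constructor
  · intro hle y
    have aux := quilt_aux rkQ (fun y => f ⊤ y) hQcov
      (fun a b hab => hcov (⊤, a) (⊤, b) (Prod.mk_covBy_mk_iff_right.2 hab))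
    have h1 := aux y ⊥ bot_le
    have h2 := aux ⊤ y le_top
    have h3 := hbot2 (⊤ : P)
    have h4 : min (rkP ⊤) (rkQ ⊤) = rkQ ⊤ := min_eq_right hle
    omega
  · intro hle x
    have aux := quilt_aux rkP (fun x => f x ⊤) hPcov
      (fun a b hab => hcov (a, ⊤) (b, ⊤) (Prod.mk_covBy_mk_iff_left.2 hab))
    have h1 := aux x ⊥ bot_le
    have h2 := aux ⊤ x le_top
    have h3 := hbot1 (⊤ : Q)
    have h4 : min (rkP ⊤) (rkQ ⊤) = rkP ⊤ := min_eq_left hle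
    omega
end

section
/- The set of quilts of type (P,Q), ordered pointwise, is a distributive lattice whose meet and join are the pointwise minimum and maximum. -/
/-- The set of quilts of type `(P, Q)`, ordered pointwise, is a distributive lattice with
meet and join given by pointwise minimum and maximum: the pointwise min and max of two
quilts are quilts, and the (pointwise) distributive laws hold. -/
theorem quilts_distributive_lattice
    {P Q : Type*} [PartialOrder P] [BoundedOrder P] [PartialOrder Q] [BoundedOrder Q]
    (rkP : P → ℕ) (rkQ : Q → ℕ) :
    (∀ f g : P → Q → ℕ, IsQuilt rkP rkQ f → IsQuilt rkP rkQ g →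
      IsQuilt rkP rkQ (fun x y => min (f x y) (g x y)) ∧
      IsQuilt rkP rkQ (fun x y => max (f x y) (g x y))) ∧
    (∀ f g h : P → Q → ℕ, IsQuilt rkP rkQ f → IsQuilt rkP rkQ g → IsQuilt rkP rkQ h →
      ∀ (x : P) (y : Q),
        max (h x y) (min (f x y) (g x y))
          = min (max (h x y) (f x y)) (max (h x y) (g x y)) ∧
        min (h x y) (max (f x y) (g x y))
          = max (min (h x y) (f x y)) (min (h x y) (g x y))) := by
  constructor
  · rintro f g ⟨f0, f0', ft, fc⟩ ⟨g0, g0', gt, gc⟩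
    refine ⟨⟨fun y => by simp [f0, g0], fun x => by simp [f0', g0'], by simp [ft, gt],
      fun a b hab => ?_⟩, ⟨fun y => by simp [f0, g0], fun x => by simp [f0', g0'],
      by simp [ft, gt], fun a b hab => ?_⟩⟩ <;>
    · rcases fc a b hab with h1 | h1 <;> rcases gc a b hab with h2 | h2 <;> dsimp only <;> omega
  · intro f g h _ _ _ x y
    constructor <;> omega
end

section
/- The function f_1(x,y) = min(rank x, rank y) is the greatest element of the lattice of quilts of type (P,Q): it is a quilt, and every quilt f satisfies f(x,y) ≤ min(rank x, rank y) for all x ∈ P, y ∈ Q. -/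
/-- The function `f₁(x, y) = min (rank x) (rank y)` is the greatest element of the lattice
of quilts of type `(P, Q)`: it is a quilt, and every quilt lies pointwise below it. -/
theorem quilt_top_element
    {P Q : Type*} [Fintype P] [PartialOrder P] [BoundedOrder P]
    [Fintype Q] [PartialOrder Q] [BoundedOrder Q]
    (rkP : P → ℕ) (rkQ : Q → ℕ)
    (hP0 : rkP ⊥ = 0) (hPcov : ∀ x y : P, x ⋖ y → rkP y = rkP x + 1)
    (hQ0 : rkQ ⊥ = 0) (hQcov : ∀ x y : Q, x ⋖ y → rkQ y = rkQ x + 1) :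
    IsQuilt rkP rkQ (fun x y => min (rkP x) (rkQ y)) ∧
    (∀ f : P → Q → ℕ, IsQuilt rkP rkQ f → ∀ (x : P) (y : Q),
      f x y ≤ min (rkP x) (rkQ y)) := by
  constructor
  · refine ⟨fun y => by simp [hP0], fun x => by simp [hQ0], rfl, ?_⟩
    rintro ⟨a1, a2⟩ ⟨b1, b2⟩ hab
    rcases Prod.covBy_iff.1 hab with ⟨h1, h2⟩ | ⟨h1, h2⟩
    · obtain rfl : a2 = b2 := h2
      have := hPcov _ _ h1
      simp only [this]
      omega
    · obtain rfl : a1 = b1 := h2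
      have := hQcov _ _ h1
      simp only [this]
      omega
  · intro f hf
    have keyP : ∀ x : P, ∀ y : Q, f x y ≤ rkP x := by
      intro x
      induction x using WellFoundedLT.induction with
      | ind x ih =>
        intro y
        rcases eq_or_ne x ⊥ with rfl | hx
        · simp [hf.1]
        · obtain ⟨z, hzle, hz⟩ := exists_le_covBy_of_lt (bot_lt_iff_ne_bot.2 hx)
          have hc : ((z, y) : P × Q) ⋖ (x, y) := Prod.mk_covBy_mk_iff_left.2 hz
          have := hf.2.2.2 _ _ hc
          have := ih z hz.lt y
          have := hPcov _ _ hz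
          simp_all
          omega
    have keyQ : ∀ y : Q, ∀ x : P, f x y ≤ rkQ y := by
      intro y
      induction y using WellFoundedLT.induction with
      | ind y ih =>
        intro x
        rcases eq_or_ne y ⊥ with rfl | hy
        · simp [hf.2.1]
        · obtain ⟨z, hzle, hz⟩ := exists_le_covBy_of_lt (bot_lt_iff_ne_bot.2 hy)
          have hc : ((x, z) : P × Q) ⋖ (x, y) := Prod.mk_covBy_mk_iff_right.2 hz
          have := hf.2.2.2 _ _ hc
          have := ih z hz.lt x
          have := hQcov _ _ hz
          simp_all
          omega
    exact fun x y => le_min (keyP x y) (keyQ y x)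
end

section
/- Let P and Q be finite ranked posets with least and greatest elements, with rank P ≤ rank Q, and let g be a Dedekind map of rank l on Q with l ≥ rank P. Then f(x,y) = min(rank x, g(y)) defines a quilt of type (P,Q), and the resulting map from Dedekind maps of rank (rank P) on Q to quilts of type (P,Q) is injective. -/
/-- A Dedekind map of rank `k` on a poset `Q` with least element. -/
def DedekindMap {Q : Type*} [PartialOrder Q] [OrderBot Q] (k : ℕ) (g : Q → ℕ) : Prop :=
  g ⊥ = 0 ∧
  (∀ x y : Q, x ⋖ y → g y = g x ∨ g y = g x + 1) ∧
  (∀ x, g x ≤ k) ∧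
  (∀ i, i ≤ k → ∃ x, g x = i)

lemma mono_of_cov' {Q : Type*} [PartialOrder Q] [Fintype Q] (g : Q → ℕ)
    (h : ∀ x y : Q, x ⋖ y → g x ≤ g y) : Monotone g := by
  classical
  haveI : LocallyFiniteOrder Q := Fintype.toLocallyFiniteOrder
  intro x y hxy
  have h' := le_iff_reflTransGen_covBy.mp hxy
  clear hxy
  induction h' with
  | refl => exact le_rfl
  | tail _ hcov ih => exact ih.trans (h _ _ hcov)

/-- If `rank P ≤ rank Q` and `g` is a Dedekind map of rank `l ≥ rank P` on `Q`, then
`f(x, y) = min (rank x) (g y)` is a quilt of type `(P, Q)`; moreover the resulting map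
from Dedekind maps of rank `rank P` on `Q` to quilts of type `(P, Q)` is injective. -/
theorem dedekind_to_quilt
    {P Q : Type*} [Fintype P] [PartialOrder P] [BoundedOrder P]
    [Fintype Q] [PartialOrder Q] [BoundedOrder Q]
    (rkP : P → ℕ) (rkQ : Q → ℕ)
    (hP0 : rkP ⊥ = 0) (hPcov : ∀ x y : P, x ⋖ y → rkP y = rkP x + 1)
    (hQ0 : rkQ ⊥ = 0) (hQcov : ∀ x y : Q, x ⋖ y → rkQ y = rkQ x + 1)
    (hPQ : rkP ⊤ ≤ rkQ ⊤) :
    (∀ (l : ℕ) (g : Q → ℕ), DedekindMap l g → rkP ⊤ ≤ l →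
      IsQuilt rkP rkQ (fun x y => min (rkP x) (g y))) ∧
    Function.Injective (fun g : {g : Q → ℕ // DedekindMap (rkP ⊤) g} =>
      fun (x : P) (y : Q) => min (rkP x) (g.1 y)) := by
  have hrkPtop : ∀ x : P, rkP x ≤ rkP ⊤ :=
    fun x => mono_of_cov' rkP (fun a b hab => by rw [hPcov a b hab]; omega) le_top
  constructor
  · intro l g hg hl
    obtain ⟨hg0, hgcov, hgle, hgsurj⟩ := hg
    have hgmono : Monotone g :=
      mono_of_cov' g (fun a b hab => by rcases hgcov a b hab with h | h <;> omega)
    have hgtop : rkP ⊤ ≤ g ⊤ := by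
      obtain ⟨x, hx⟩ := hgsurj l le_rfl
      exact hl.trans (hx ▸ hgmono le_top)
    refine ⟨fun y => by simp [hP0], fun x => by simp [hg0], ?_, ?_⟩
    · simp only
      omega
    · rintro ⟨a1, a2⟩ ⟨b1, b2⟩ hab
      rcases Prod.mk_covBy_mk_iff.mp hab with ⟨h1, rfl⟩ | ⟨h2, rfl⟩
      · have := hPcov _ _ h1; simp only; omega
      · rcases hgcov _ _ h2 with h | h <;> · simp only; omega
  · rintro ⟨g1, hg1⟩ ⟨g2, hg2⟩ h
    have h' := congrFun (congrFun h ⊤)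
    simp only at h'
    ext y
    have e := h' y
    simp only [min_eq_right (hg1.2.2.1 y), min_eq_right (hg2.2.2.1 y)] at e
    exact e
end

section
/- Let φ be an antiautomorphism of P (an order-reversing bijection P → P whose inverse is also order-reversing) and suppose rank P ≥ rank Q. Then the map Φ defined by Φ(f)(x,y) = rank(y) − f(φ(x), y) sends quilts of type (P,Q) to quilts of type (P,Q) and is an antiautomorphism of the lattice Quilts(P,Q); moreover if φ is an involution then so is Φ. -/
set_option linter.unusedSectionVars false

section Aux
variable {Q : Type*} [Fintype Q] [PartialOrder Q]

lemma auxQ_exists_covby_of_ne_bot [OrderBot Q] {y : Q} (h : y ≠ ⊥) : ∃ z, z ⋖ y := by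
  classical
  obtain ⟨z, hz, hmax⟩ := (Finset.univ.filter (· < y)).exists_maximal
    ⟨⊥, by simp [bot_lt_iff_ne_bot.2 h]⟩
  simp only [Finset.mem_filter, Finset.mem_univ, true_and] at hz hmax
  exact ⟨z, hz, fun c hzc hcy => lt_irrefl _ (lt_of_lt_of_le hzc (hmax hcy hzc.le))⟩

lemma auxQ_exists_covby_of_ne_top [OrderTop Q] {y : Q} (h : y ≠ ⊤) : ∃ z, y ⋖ z := by
  classical
  obtain ⟨z, hz, hmin⟩ := (Finset.univ.filter (y < ·)).exists_minimal
    ⟨⊤, by simp [lt_top_iff_ne_top.2 h]⟩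
  simp only [Finset.mem_filter, Finset.mem_univ, true_and] at hz hmin
  exact ⟨z, hz, fun c hyc hcz => lt_irrefl _ (lt_of_lt_of_le hcz (hmin hyc hcz.le))⟩

end Aux

section Main
variable {P Q : Type*} [Fintype P] [PartialOrder P] [BoundedOrder P]
    [Fintype Q] [PartialOrder Q] [BoundedOrder Q]
    {rkP : P → ℕ} {rkQ : Q → ℕ}

lemma auxQ_f_le (hQ0 : rkQ ⊥ = 0) (hQcov : ∀ x y : Q, x ⋖ y → rkQ y = rkQ x + 1)
    {f : P → Q → ℕ} (hf : IsQuilt rkP rkQ f) (x : P) (y : Q) : f x y ≤ rkQ y := by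
  induction y using WellFoundedLT.induction with
  | _ y ih =>
    rcases eq_or_ne y ⊥ with rfl | hy
    · simp [hf.2.1, hQ0]
    · obtain ⟨z, hz⟩ := auxQ_exists_covby_of_ne_bot hy
      have hcov : ((x, z) : P × Q) ⋖ (x, y) := Prod.mk_covBy_mk_iff_right.2 hz
      have h1 := hf.2.2.2 _ _ hcov
      simp only at h1
      have hle := ih z hz.lt
      rw [hQcov z y hz]
      omega

lemma auxQ_f_top (hQ0 : rkQ ⊥ = 0) (hQcov : ∀ x y : Q, x ⋖ y → rkQ y = rkQ x + 1)
    (hrk : rkQ ⊤ ≤ rkP ⊤)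
    {f : P → Q → ℕ} (hf : IsQuilt rkP rkQ f) (y : Q) : f ⊤ y = rkQ y := by
  induction y using WellFoundedGT.induction with
  | _ y ih =>
    rcases eq_or_ne y ⊤ with rfl | hy
    · rw [hf.2.2.1]; omega
    · obtain ⟨z, hz⟩ := auxQ_exists_covby_of_ne_top hy
      have hcov : (((⊤ : P), y) : P × Q) ⋖ (⊤, z) := Prod.mk_covBy_mk_iff_right.2 hz
      have h1 := hf.2.2.2 _ _ hcov
      have h2 := ih z hz.lt
      have h3 := auxQ_f_le hQ0 hQcov hf (⊤ : P) y
      have h4 := hQcov y z hz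
      simp only at h1
      omega

variable (φ : P → P) (hbij : Function.Bijective φ)
    (hanti : ∀ x y : P, x ≤ y ↔ φ y ≤ φ x)

include hbij hanti in
lemma auxQ_phi_top : φ ⊤ = ⊥ := by
  obtain ⟨w, hw⟩ := hbij.2 (⊥ : P)
  exact le_antisymm (hw ▸ (hanti w ⊤).1 le_top) bot_le

include hbij hanti in
lemma auxQ_phi_bot : φ ⊥ = ⊤ := by
  obtain ⟨w, hw⟩ := hbij.2 (⊤ : P)
  exact le_antisymm le_top (hw ▸ (hanti ⊥ w).1 bot_le)

include hbij hanti in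
lemma auxQ_phi_lt {a b : P} (h : a < b) : φ b < φ a :=
  lt_of_le_of_ne ((hanti a b).1 h.le) (fun he => h.ne (hbij.1 he.symm))

include hbij hanti in
lemma auxQ_phi_cov {a b : P} (h : a ⋖ b) : φ b ⋖ φ a := by
  refine ⟨auxQ_phi_lt φ hbij hanti h.lt, ?_⟩
  intro c h1 h2
  obtain ⟨d, rfl⟩ := hbij.2 c
  have hdb : d < b := lt_of_le_of_ne ((hanti d b).2 h1.le) (fun he => h1.ne (by rw [he]))
  have had : a < d := lt_of_le_of_ne ((hanti a d).2 h2.le) (fun he => h2.ne (by rw [he]))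
  exact h.2 had hdb

include hbij hanti in
lemma auxQ_maps (hQ0 : rkQ ⊥ = 0) (hQcov : ∀ x y : Q, x ⋖ y → rkQ y = rkQ x + 1)
    (hrk : rkQ ⊤ ≤ rkP ⊤)
    {f : P → Q → ℕ} (hf : IsQuilt rkP rkQ f) :
    IsQuilt rkP rkQ (fun x y => rkQ y - f (φ x) y) := by
  refine ⟨?_, ?_, ?_, ?_⟩
  · intro y
    simp [auxQ_phi_bot φ hbij hanti, auxQ_f_top hQ0 hQcov hrk hf]
  · intro x; simp [hQ0]
  · simp [auxQ_phi_top φ hbij hanti, hf.1, min_eq_right hrk]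
  · rintro ⟨a1, a2⟩ ⟨b1, b2⟩ hcov
    simp only
    rcases Prod.mk_covBy_mk_iff.1 hcov with ⟨h1, rfl⟩ | ⟨h2, rfl⟩
    · have hc : ((φ b1, a2) : P × Q) ⋖ (φ a1, a2) :=
        Prod.mk_covBy_mk_iff_left.2 (auxQ_phi_cov φ hbij hanti h1)
      have h := hf.2.2.2 _ _ hc
      have hle1 := auxQ_f_le hQ0 hQcov hf (φ a1) a2
      have hle2 := auxQ_f_le hQ0 hQcov hf (φ b1) a2
      simp only at h
      omega
    · have hc : ((φ a1, a2) : P × Q) ⋖ (φ a1, b2) := Prod.mk_covBy_mk_iff_right.2 h2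
      have h := hf.2.2.2 _ _ hc
      have hle1 := auxQ_f_le hQ0 hQcov hf (φ a1) a2
      have hr := hQcov a2 b2 h2
      simp only at h
      omega

end Main

/-- Let `φ` be an antiautomorphism of `P` (an order-reversing bijection) and suppose
`rank P ≥ rank Q`. Then `Φ(f)(x, y) = rank y - f(φ x, y)` maps quilts of type `(P, Q)`
to quilts of type `(P, Q)`, is an antiautomorphism of the quilt lattice (an
order-reversing bijection of the set of quilts onto itself), and is an involution on
quilts whenever `φ` is an involution. -/
theorem quilt_antiautomorphism
    {P Q : Type*} [Fintype P] [PartialOrder P] [BoundedOrder P]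
    [Fintype Q] [PartialOrder Q] [BoundedOrder Q]
    (rkP : P → ℕ) (rkQ : Q → ℕ)
    (hP0 : rkP ⊥ = 0) (hPcov : ∀ x y : P, x ⋖ y → rkP y = rkP x + 1)
    (hQ0 : rkQ ⊥ = 0) (hQcov : ∀ x y : Q, x ⋖ y → rkQ y = rkQ x + 1)
    (hrk : rkQ ⊤ ≤ rkP ⊤)
    (φ : P → P) (hbij : Function.Bijective φ)
    (hanti : ∀ x y : P, x ≤ y ↔ φ y ≤ φ x) :
    (∀ f : P → Q → ℕ, IsQuilt rkP rkQ f →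
      IsQuilt rkP rkQ (fun x y => rkQ y - f (φ x) y)) ∧
    Set.BijOn (fun (f : P → Q → ℕ) => fun x y => rkQ y - f (φ x) y)
      {f | IsQuilt rkP rkQ f} {f | IsQuilt rkP rkQ f} ∧
    (∀ f g : P → Q → ℕ, IsQuilt rkP rkQ f → IsQuilt rkP rkQ g →
      ((∀ (x : P) (y : Q), f x y ≤ g x y) ↔
        (∀ (x : P) (y : Q), rkQ y - g (φ x) y ≤ rkQ y - f (φ x) y))) ∧
    ((∀ x, φ (φ x) = x) → ∀ f : P → Q → ℕ, IsQuilt rkP rkQ f →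
      (fun x y => rkQ y - (fun x y => rkQ y - f (φ x) y) (φ x) y) = f) := by
  set e := Equiv.ofBijective φ hbij with he
  set ψ : P → P := ⇑e.symm with hψ
  have hφψ : ∀ x, φ (ψ x) = x := fun x => e.apply_symm_apply x
  have hψφ : ∀ x, ψ (φ x) = x := fun x => e.symm_apply_apply x
  have hψbij : Function.Bijective ψ := e.symm.bijective
  have hψanti : ∀ x y : P, x ≤ y ↔ ψ y ≤ ψ x := by
    intro x y
    rw [hanti (ψ y) (ψ x), hφψ, hφψ]
  refine ⟨fun f hf => auxQ_maps φ hbij hanti hQ0 hQcov hrk hf, ⟨?_, ?_, ?_⟩, ?_, ?_⟩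
  · exact fun f hf => auxQ_maps φ hbij hanti hQ0 hQcov hrk hf
  · intro f hf g hg h
    funext x y
    have hx := congrFun (congrFun h (ψ x)) y
    simp only [hφψ] at hx
    have h1 := auxQ_f_le hQ0 hQcov hf x y
    have h2 := auxQ_f_le hQ0 hQcov hg x y
    omega
  · intro g hg
    refine ⟨fun x y => rkQ y - g (ψ x) y, auxQ_maps ψ hψbij hψanti hQ0 hQcov hrk hg, ?_⟩
    funext x y
    simp only [hψφ]
    have := auxQ_f_le hQ0 hQcov hg x y
    omega
  · intro f g hf hg
    constructor
    · intro h x y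
      exact Nat.sub_le_sub_left (h _ _) _
    · intro h x y
      have := h (ψ x) y
      simp only [hφψ] at this
      have h1 := auxQ_f_le hQ0 hQcov hf x y
      have h2 := auxQ_f_le hQ0 hQcov hg x y
      omega
  · intro hinv f hf
    funext x y
    simp only [hinv]
    have := auxQ_f_le hQ0 hQcov hf x y
    omega
end

section
/- Let P_1, P_2 be finite ranked posets with least and greatest elements satisfying rank P_1 = rank P_2 ≥ rank Q, and let P_1 + P_2 be their disjoint union obtained by identifying the two least elements and the two greatest elements. Then the restriction map f ↦ (f|_{P_1 × Q}, f|_{P_2 × Q}) is a lattice isomorphism from Quilts(P_1 + P_2, Q) to Quilts(P_1, Q) × Quilts(P_2, Q). -/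
section Glue

variable (P₁ P₂ : Type*) [PartialOrder P₁] [BoundedOrder P₁] [PartialOrder P₂] [BoundedOrder P₂]

/-- The disjoint union `P₁ + P₂`: glue two bounded posets along their least and greatest
elements.  It is realized as `⊥`, `⊤`, and the disjoint (incomparable) union of the two
open intervals `P₁ \ {⊥, ⊤}` and `P₂ \ {⊥, ⊤}`. -/
abbrev GlueSum :=
  WithBot (WithTop ({a : P₁ // a ≠ ⊥ ∧ a ≠ ⊤} ⊕ {a : P₂ // a ≠ ⊥ ∧ a ≠ ⊤}))

variable {P₁ P₂}

open Classical in
/-- The canonical embedding of `P₁` into the glued poset. -/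
noncomputable def glueEmb₁ (x : P₁) : GlueSum P₁ P₂ :=
  if h0 : x = ⊥ then ⊥ else if h1 : x = ⊤ then ⊤ else
    (((Sum.inl ⟨x, h0, h1⟩ : {a : P₁ // a ≠ ⊥ ∧ a ≠ ⊤} ⊕ {a : P₂ // a ≠ ⊥ ∧ a ≠ ⊤}) :
      WithTop ({a : P₁ // a ≠ ⊥ ∧ a ≠ ⊤} ⊕ {a : P₂ // a ≠ ⊥ ∧ a ≠ ⊤})) : GlueSum P₁ P₂)

open Classical in
/-- The canonical embedding of `P₂` into the glued poset. -/
noncomputable def glueEmb₂ (x : P₂) : GlueSum P₁ P₂ :=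
  if h0 : x = ⊥ then ⊥ else if h1 : x = ⊤ then ⊤ else
    (((Sum.inr ⟨x, h0, h1⟩ : {a : P₁ // a ≠ ⊥ ∧ a ≠ ⊤} ⊕ {a : P₂ // a ≠ ⊥ ∧ a ≠ ⊤}) :
      WithTop ({a : P₁ // a ≠ ⊥ ∧ a ≠ ⊤} ⊕ {a : P₂ // a ≠ ⊥ ∧ a ≠ ⊤})) : GlueSum P₁ P₂)

/-- The rank function on the glued poset. -/
noncomputable def glueRank (rk₁ : P₁ → ℕ) (rk₂ : P₂ → ℕ) : GlueSum P₁ P₂ → ℕ :=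
  WithBot.recBotCoe 0 (WithTop.recTopCoe (rk₁ ⊤) (Sum.elim (fun a => rk₁ a.1) (fun a => rk₂ a.1)))

end Glue

section AuxInduction

private lemma covle_ind {α : Type*} [PartialOrder α] [Finite α] {C : α → α → Prop}
    (hrefl : ∀ a, C a a)
    (hstep : ∀ a b c, a ≤ b → b ⋖ c → C a b → C a c) :
    ∀ a b : α, a ≤ b → C a b := by
  intro a b
  induction b using WellFoundedLT.induction with
  | _ b IH =>
    intro hab
    rcases eq_or_lt_of_le hab with rfl | hlt
    · exact hrefl a
    · obtain ⟨c, hac, hcb⟩ := exists_le_covBy_of_lt hlt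
      exact hstep a c b hac hcb (IH c hcb.lt hac)

private lemma rank_mono {α : Type*} [PartialOrder α] [Finite α] {rk : α → ℕ}
    (hc : ∀ x y : α, x ⋖ y → rk y = rk x + 1) {a b : α} (hab : a ≤ b) : rk a ≤ rk b :=
  covle_ind (C := fun a b => rk a ≤ rk b) (fun _ => le_refl _)
    (fun a b c _ hbc h => by have := hc b c hbc; omega) a b hab

end AuxInduction

section AuxQuilt
variable {P Q : Type*} [PartialOrder P] [PartialOrder Q] [Finite P] [Finite Q]

set_option linter.unusedSectionVars false

private lemma quilt_grow {f : P → Q → ℕ} {rkQ : Q → ℕ}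
    (hf : ∀ a b : P × Q, a ⋖ b → f b.1 b.2 = f a.1 a.2 ∨ f b.1 b.2 = f a.1 a.2 + 1)
    (hQc : ∀ x y : Q, x ⋖ y → rkQ y = rkQ x + 1)
    (x : P) {q q' : Q} (h : q ≤ q') : f x q' + rkQ q ≤ f x q + rkQ q' := by
  refine covle_ind (C := fun q q' : Q => f x q' + rkQ q ≤ f x q + rkQ q')
    (fun _ => le_refl _) ?_ q q' h
  intro a b c hab hbc IH
  have hcov : ((x, b) : P × Q) ⋖ (x, c) := Prod.mk_covBy_mk_iff.2 (Or.inr ⟨hbc, rfl⟩)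
  have := hf _ _ hcov
  have hr := hQc b c hbc
  simp only at this
  omega

private lemma quilt_top [BoundedOrder P] [BoundedOrder Q] {rkP : P → ℕ} {rkQ : Q → ℕ}
    {f : P → Q → ℕ}
    (hQ0 : rkQ ⊥ = 0) (hQc : ∀ x y : Q, x ⋖ y → rkQ y = rkQ x + 1)
    (hge : rkQ ⊤ ≤ rkP ⊤) (hf : IsQuilt rkP rkQ f) (y : Q) : f ⊤ y = rkQ y := by
  obtain ⟨h1, h2, h3, h4⟩ := hf
  have htt : f ⊤ ⊤ = rkQ ⊤ := by rw [h3]; omega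
  have u := quilt_grow h4 hQc (⊤ : P) (bot_le (a := y))
  have l := quilt_grow h4 hQc (⊤ : P) (le_top (a := y))
  have h2' := h2 (⊤ : P)
  omega

end AuxQuilt

section Wsec
variable {α β : Type*} [PartialOrder α] [PartialOrder β]

private def jl (a : α) : WithBot (WithTop (α ⊕ β)) := ((Sum.inl a : α ⊕ β) : WithTop (α ⊕ β))
private def jr (b : β) : WithBot (WithTop (α ⊕ β)) := ((Sum.inr b : α ⊕ β) : WithTop (α ⊕ β))

local notation "GW" => WithBot (WithTop (α ⊕ β))

private lemma shapeW (z : GW) : z = ⊥ ∨ z = ⊤ ∨ (∃ a, z = jl a) ∨ (∃ b, z = jr b) := by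
  rcases z with _ | (_ | (a | b))
  · exact Or.inl rfl
  · exact Or.inr (Or.inl rfl)
  · exact Or.inr (Or.inr (Or.inl ⟨a, rfl⟩))
  · exact Or.inr (Or.inr (Or.inr ⟨b, rfl⟩))

private lemma lt_simp1 (a a' : α) : ((jl a : GW) < jl a') ↔ a < a' := by
  simp [jl, WithBot.coe_lt_coe, WithTop.coe_lt_coe]
private lemma lt_simp1r (b b' : β) : ((jr b : GW) < jr b') ↔ b < b' := by
  simp [jr, WithBot.coe_lt_coe, WithTop.coe_lt_coe]
private lemma lt_simp2 (a : α) (b : β) : ¬ ((jl a : GW) < jr b) := by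
  simp [jl, jr, lt_iff_le_not_ge, WithBot.coe_le_coe, WithTop.coe_le_coe]
private lemma lt_simp2' (a : α) (b : β) : ¬ ((jr b : GW) < jl a) := by
  simp [jl, jr, lt_iff_le_not_ge, WithBot.coe_le_coe, WithTop.coe_le_coe]
private lemma lt_simp3 (a : α) : (⊥ : GW) < jl a := by simp [jl]
private lemma lt_simp3r (b : β) : (⊥ : GW) < jr b := by simp [jr]
private lemma lt_simp4 (a : α) : (jl a : GW) < ⊤ := by
  simp [jl, lt_iff_le_not_ge, WithBot.coe_le_coe]
private lemma lt_simp4r (b : β) : (jr b : GW) < ⊤ := by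
  simp [jr, lt_iff_le_not_ge, WithBot.coe_le_coe]
private lemma lt_simp5 (a : α) : ¬ ((⊤ : GW) < jl a) :=
  fun h => not_top_lt (WithBot.coe_lt_coe.1 h)
private lemma lt_simp5r (b : β) : ¬ ((⊤ : GW) < jr b) :=
  fun h => not_top_lt (WithBot.coe_lt_coe.1 h)
private lemma lt_simp6 : ¬ ((⊤ : GW) < ⊤) := fun h => lt_irrefl _ h

private lemma q_covBy_jl_jl {a a' : α} (h : (jl a : GW) ⋖ jl a') : a ⋖ a' :=
  ⟨(lt_simp1 a a').1 h.lt, fun _ hc hc' => h.2 ((lt_simp1 _ _).2 hc) ((lt_simp1 _ _).2 hc')⟩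
private lemma q_covBy_jr_jr {b b' : β} (h : (jr b : GW) ⋖ jr b') : b ⋖ b' :=
  ⟨(lt_simp1r b b').1 h.lt, fun _ hc hc' => h.2 ((lt_simp1r _ _).2 hc) ((lt_simp1r _ _).2 hc')⟩

private lemma q_bot_covBy_jl {a : α} (h : (⊥ : GW) ⋖ jl a) : ∀ a', ¬ a' < a :=
  fun a' ha' => h.2 (lt_simp3 a') ((lt_simp1 a' a).2 ha')
private lemma q_bot_covBy_jr {b : β} (h : (⊥ : GW) ⋖ jr b) : ∀ b', ¬ b' < b :=
  fun b' hb' => h.2 (lt_simp3r b') ((lt_simp1r b' b).2 hb')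

private lemma q_jl_covBy_top {a : α} (h : (jl a : GW) ⋖ ⊤) : ∀ a', ¬ a < a' :=
  fun a' ha' => h.2 ((lt_simp1 a a').2 ha') (lt_simp4 a')
private lemma q_jr_covBy_top {b : β} (h : (jr b : GW) ⋖ ⊤) : ∀ b', ¬ b < b' :=
  fun b' hb' => h.2 ((lt_simp1r b b').2 hb') (lt_simp4r b')

private lemma q_bot_covBy_top (h : (⊥ : GW) ⋖ ⊤) : IsEmpty (α ⊕ β) := by
  refine ⟨fun s => ?_⟩
  have h1 : (⊥ : GW) < (s : WithTop (α ⊕ β)) := by simp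
  have h2 : ((s : WithTop (α ⊕ β)) : GW) < ⊤ := by
    simp [lt_iff_le_not_ge, WithBot.coe_le_coe]
  exact h.2 h1 h2

private lemma q_covBy_jl_jl' {a a' : α} (h : a ⋖ a') : (jl a : GW) ⋖ jl a' := by
  refine ⟨(lt_simp1 a a').2 h.lt, fun c hc hc' => ?_⟩
  rcases c with _ | (_ | (x | y))
  · exact absurd hc not_lt_bot
  · exact lt_simp5 a' hc'
  · exact h.2 ((lt_simp1 a x).1 hc) ((lt_simp1 x a').1 hc')
  · exact lt_simp2 a y hc
private lemma q_covBy_jr_jr' {b b' : β} (h : b ⋖ b') : (jr b : GW) ⋖ jr b' := by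
  refine ⟨(lt_simp1r b b').2 h.lt, fun c hc hc' => ?_⟩
  rcases c with _ | (_ | (x | y))
  · exact absurd hc not_lt_bot
  · exact lt_simp5r b' hc'
  · exact lt_simp2' x b hc
  · exact h.2 ((lt_simp1r b y).1 hc) ((lt_simp1r y b').1 hc')

private lemma q_bot_covBy_jl' {a : α} (hmin : ∀ a', ¬ a' < a) : (⊥ : GW) ⋖ jl a := by
  refine ⟨lt_simp3 a, fun c hc hc' => ?_⟩
  rcases c with _ | (_ | (x | y))
  · exact absurd hc (lt_irrefl _)
  · exact lt_simp5 a hc'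
  · exact hmin x ((lt_simp1 x a).1 hc')
  · exact lt_simp2' a y hc'
private lemma q_bot_covBy_jr' {b : β} (hmin : ∀ b', ¬ b' < b) : (⊥ : GW) ⋖ jr b := by
  refine ⟨lt_simp3r b, fun c hc hc' => ?_⟩
  rcases c with _ | (_ | (x | y))
  · exact absurd hc (lt_irrefl _)
  · exact lt_simp5r b hc'
  · exact lt_simp2 x b hc'
  · exact hmin y ((lt_simp1r y b).1 hc')

private lemma q_jl_covBy_top' {a : α} (hmax : ∀ a', ¬ a < a') : (jl a : GW) ⋖ ⊤ := by
  refine ⟨lt_simp4 a, fun c hc hc' => ?_⟩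
  rcases c with _ | (_ | (x | y))
  · exact absurd hc not_lt_bot
  · exact lt_simp6 hc'
  · exact hmax x ((lt_simp1 a x).1 hc)
  · exact lt_simp2 a y hc
private lemma q_jr_covBy_top' {b : β} (hmax : ∀ b', ¬ b < b') : (jr b : GW) ⋖ ⊤ := by
  refine ⟨lt_simp4r b, fun c hc hc' => ?_⟩
  rcases c with _ | (_ | (x | y))
  · exact absurd hc not_lt_bot
  · exact lt_simp6 hc'
  · exact lt_simp2' x b hc
  · exact hmax y ((lt_simp1r b y).1 hc)

end Wsec
section GlueAux
variable {P₁ P₂ : Type*} [PartialOrder P₁] [BoundedOrder P₁] [PartialOrder P₂] [BoundedOrder P₂]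

private lemma glueEmb₁_bot : (glueEmb₁ (⊥ : P₁) : GlueSum P₁ P₂) = ⊥ := by
  rw [glueEmb₁, dif_pos rfl]

private lemma glueEmb₁_top (h : (⊥ : P₁) ≠ ⊤) : (glueEmb₁ (⊤ : P₁) : GlueSum P₁ P₂) = ⊤ := by
  rw [glueEmb₁, dif_neg (fun hh => h hh.symm), dif_pos rfl]

private lemma glueEmb₁_mid {x : P₁} (h0 : x ≠ ⊥) (h1 : x ≠ ⊤) :
    (glueEmb₁ x : GlueSum P₁ P₂) = jl ⟨x, h0, h1⟩ := by
  rw [glueEmb₁, dif_neg h0, dif_neg h1]; rfl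

private lemma glueEmb₂_bot : (glueEmb₂ (⊥ : P₂) : GlueSum P₁ P₂) = ⊥ := by
  rw [glueEmb₂, dif_pos rfl]

private lemma glueEmb₂_top (h : (⊥ : P₂) ≠ ⊤) : (glueEmb₂ (⊤ : P₂) : GlueSum P₁ P₂) = ⊤ := by
  rw [glueEmb₂, dif_neg (fun hh => h hh.symm), dif_pos rfl]

private lemma glueEmb₂_mid {x : P₂} (h0 : x ≠ ⊥) (h1 : x ≠ ⊤) :
    (glueEmb₂ x : GlueSum P₁ P₂) = jr ⟨x, h0, h1⟩ := by
  rw [glueEmb₂, dif_neg h0, dif_neg h1]; rfl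

private lemma R1 {s : {a : P₁ // a ≠ ⊥ ∧ a ≠ ⊤}} (h : (⊥ : GlueSum P₁ P₂) ⋖ jl s) :
    (⊥ : P₁) ⋖ s.1 := by
  have hm := q_bot_covBy_jl h
  refine ⟨bot_lt_iff_ne_bot.2 s.2.1, fun z hz hz' => ?_⟩
  exact hm ⟨z, ne_bot_of_gt hz, ne_top_of_lt hz'⟩ (Subtype.coe_lt_coe.1 hz')

private lemma R1r {s : {a : P₂ // a ≠ ⊥ ∧ a ≠ ⊤}} (h : (⊥ : GlueSum P₁ P₂) ⋖ jr s) :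
    (⊥ : P₂) ⋖ s.1 := by
  have hm := q_bot_covBy_jr h
  refine ⟨bot_lt_iff_ne_bot.2 s.2.1, fun z hz hz' => ?_⟩
  exact hm ⟨z, ne_bot_of_gt hz, ne_top_of_lt hz'⟩ (Subtype.coe_lt_coe.1 hz')

private lemma R2 {s t : {a : P₁ // a ≠ ⊥ ∧ a ≠ ⊤}} (h : (jl s : GlueSum P₁ P₂) ⋖ jl t) :
    s.1 ⋖ t.1 := by
  have hm := q_covBy_jl_jl h
  refine ⟨Subtype.coe_lt_coe.2 hm.lt, fun z hz hz' => ?_⟩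
  exact hm.2 (c := ⟨z, ne_bot_of_gt hz, ne_top_of_lt hz'⟩)
    (Subtype.coe_lt_coe.1 hz) (Subtype.coe_lt_coe.1 hz')

private lemma R2r {s t : {a : P₂ // a ≠ ⊥ ∧ a ≠ ⊤}} (h : (jr s : GlueSum P₁ P₂) ⋖ jr t) :
    s.1 ⋖ t.1 := by
  have hm := q_covBy_jr_jr h
  refine ⟨Subtype.coe_lt_coe.2 hm.lt, fun z hz hz' => ?_⟩
  exact hm.2 (c := ⟨z, ne_bot_of_gt hz, ne_top_of_lt hz'⟩)
    (Subtype.coe_lt_coe.1 hz) (Subtype.coe_lt_coe.1 hz')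

private lemma R3 {s : {a : P₁ // a ≠ ⊥ ∧ a ≠ ⊤}} (h : (jl s : GlueSum P₁ P₂) ⋖ ⊤) :
    s.1 ⋖ (⊤ : P₁) := by
  have hm := q_jl_covBy_top h
  refine ⟨s.2.2.lt_top, fun z hz hz' => ?_⟩
  exact hm ⟨z, ne_bot_of_gt hz, ne_of_lt hz'⟩ (Subtype.coe_lt_coe.1 hz)

private lemma R3r {s : {a : P₂ // a ≠ ⊥ ∧ a ≠ ⊤}} (h : (jr s : GlueSum P₁ P₂) ⋖ ⊤) :
    s.1 ⋖ (⊤ : P₂) := by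
  have hm := q_jr_covBy_top h
  refine ⟨s.2.2.lt_top, fun z hz hz' => ?_⟩
  exact hm ⟨z, ne_bot_of_gt hz, ne_of_lt hz'⟩ (Subtype.coe_lt_coe.1 hz)

private lemma R4 (h : (⊥ : GlueSum P₁ P₂) ⋖ ⊤) : ∀ x : P₁, x = ⊥ ∨ x = ⊤ := by
  have he := q_bot_covBy_top h
  intro x
  by_contra hx
  push_neg at hx
  exact (he.false (Sum.inl ⟨x, hx.1, hx.2⟩)).elim

private lemma quilt_rank_le_one {P : Type*} [PartialOrder P] [BoundedOrder P] {rk : P → ℕ}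
    (h0 : rk ⊥ = 0) (hc : ∀ x y : P, x ⋖ y → rk y = rk x + 1)
    (hall : ∀ x : P, x = ⊥ ∨ x = ⊤) : rk ⊤ ≤ 1 := by
  by_cases hbt : (⊥ : P) = ⊤
  · rw [← hbt, h0]; omega
  · have hcov : (⊥ : P) ⋖ ⊤ := by
      refine ⟨bot_lt_iff_ne_bot.2 (fun hh => hbt hh.symm), fun z hz hz' => ?_⟩
      rcases hall z with rfl | rfl
      · exact lt_irrefl _ hz
      · exact lt_irrefl _ hz'
    rw [hc ⊥ ⊤ hcov, h0]

private lemma M1 {x y : P₁} (h : x ⋖ y) :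
    (x = ⊥ ∧ y = ⊤) ∨ (glueEmb₁ x : GlueSum P₁ P₂) ⋖ glueEmb₁ y := by
  by_cases hx0 : x = ⊥
  · subst hx0
    by_cases hy1 : y = ⊤
    · exact Or.inl ⟨rfl, hy1⟩
    · have hy0 : y ≠ ⊥ := ne_bot_of_gt h.lt
      right
      rw [glueEmb₁_bot, glueEmb₁_mid hy0 hy1]
      exact q_bot_covBy_jl'
        (fun t ht => h.2 (bot_lt_iff_ne_bot.2 t.2.1) (Subtype.coe_lt_coe.2 ht))
  · have hx1 : x ≠ ⊤ := fun hh => not_top_lt (hh ▸ h.lt)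
    by_cases hy1 : y = ⊤
    · subst hy1
      right
      have hbt : (⊥ : P₁) ≠ ⊤ := fun hh => hx0 (le_bot_iff.1 (le_top.trans hh.symm.le))
      rw [glueEmb₁_mid hx0 hx1, glueEmb₁_top hbt]
      exact q_jl_covBy_top' (fun t ht => h.2 (Subtype.coe_lt_coe.2 ht) t.2.2.lt_top)
    · have hy0 : y ≠ ⊥ := ne_bot_of_gt h.lt
      right
      rw [glueEmb₁_mid hx0 hx1, glueEmb₁_mid hy0 hy1]
      exact q_covBy_jl_jl'
        ⟨Subtype.mk_lt_mk.2 h.lt,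
          fun t ht ht' => h.2 (Subtype.coe_lt_coe.2 ht) (Subtype.coe_lt_coe.2 ht')⟩

private lemma M2 {x y : P₂} (h : x ⋖ y) :
    (x = ⊥ ∧ y = ⊤) ∨ (glueEmb₂ x : GlueSum P₁ P₂) ⋖ glueEmb₂ y := by
  by_cases hx0 : x = ⊥
  · subst hx0
    by_cases hy1 : y = ⊤
    · exact Or.inl ⟨rfl, hy1⟩
    · have hy0 : y ≠ ⊥ := ne_bot_of_gt h.lt
      right
      rw [glueEmb₂_bot, glueEmb₂_mid hy0 hy1]
      exact q_bot_covBy_jr'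
        (fun t ht => h.2 (bot_lt_iff_ne_bot.2 t.2.1) (Subtype.coe_lt_coe.2 ht))
  · have hx1 : x ≠ ⊤ := fun hh => not_top_lt (hh ▸ h.lt)
    by_cases hy1 : y = ⊤
    · subst hy1
      right
      have hbt : (⊥ : P₂) ≠ ⊤ := fun hh => hx0 (le_bot_iff.1 (le_top.trans hh.symm.le))
      rw [glueEmb₂_mid hx0 hx1, glueEmb₂_top hbt]
      exact q_jr_covBy_top' (fun t ht => h.2 (Subtype.coe_lt_coe.2 ht) t.2.2.lt_top)
    · have hy0 : y ≠ ⊥ := ne_bot_of_gt h.lt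
      right
      rw [glueEmb₂_mid hx0 hx1, glueEmb₂_mid hy0 hy1]
      exact q_covBy_jr_jr'
        ⟨Subtype.mk_lt_mk.2 h.lt,
          fun t ht ht' => h.2 (Subtype.coe_lt_coe.2 ht) (Subtype.coe_lt_coe.2 ht')⟩

private noncomputable def glueF {Q : Type*} (rkQ : Q → ℕ)
    (f₁ : P₁ → Q → ℕ) (f₂ : P₂ → Q → ℕ) : GlueSum P₁ P₂ → Q → ℕ :=
  WithBot.recBotCoe (fun _ => 0)
    (WithTop.recTopCoe rkQ (Sum.elim (fun s => f₁ s.1) (fun s => f₂ s.1)))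

end GlueAux
section GlueMain
variable {P₁ P₂ Q : Type*}
  [PartialOrder P₁] [BoundedOrder P₁] [PartialOrder P₂] [BoundedOrder P₂]
  [PartialOrder Q] [BoundedOrder Q] [Finite P₁] [Finite P₂] [Finite Q]

set_option linter.unusedSectionVars false

private instance glueSum.finite : Finite (GlueSum P₁ P₂) := by
  classical
  have := Fintype.ofFinite P₁
  have := Fintype.ofFinite P₂
  have h : Finite (Option (Option ({a : P₁ // a ≠ ⊥ ∧ a ≠ ⊤} ⊕ {a : P₂ // a ≠ ⊥ ∧ a ≠ ⊤}))) :=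
    Finite.of_fintype _
  exact h

private lemma restrict₁ {rk₁ : P₁ → ℕ} {rk₂ : P₂ → ℕ} {rkQ : Q → ℕ}
    (h10 : rk₁ ⊥ = 0) (h1c : ∀ x y : P₁, x ⋖ y → rk₁ y = rk₁ x + 1)
    (hQ0 : rkQ ⊥ = 0) (hQc : ∀ x y : Q, x ⋖ y → rkQ y = rkQ x + 1)
    (hge : rkQ ⊤ ≤ rk₁ ⊤)
    {f : GlueSum P₁ P₂ → Q → ℕ} (hf : IsQuilt (glueRank rk₁ rk₂) rkQ f) :
    IsQuilt rk₁ rkQ (fun x y => f (glueEmb₁ x) y) := by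
  have htop : ∀ y, f ⊤ y = rkQ y :=
    quilt_top hQ0 hQc (show rkQ ⊤ ≤ glueRank rk₁ rk₂ ⊤ from hge) hf
  obtain ⟨hb, hb2, ht, hc⟩ := hf
  refine ⟨fun y => by show f (glueEmb₁ ⊥) y = 0; rw [glueEmb₁_bot]; exact hb y, fun x => hb2 _, ?_, ?_⟩
  · by_cases hbt : (⊥ : P₁) = ⊤
    · show f (glueEmb₁ ⊤) ⊤ = min (rk₁ ⊤) (rkQ ⊤)
      rw [← hbt, glueEmb₁_bot, hb, h10]
      simp
    · show f (glueEmb₁ ⊤) ⊤ = min (rk₁ ⊤) (rkQ ⊤)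
      rw [glueEmb₁_top hbt]
      exact ht
  · rintro ⟨a1, a2⟩ ⟨b1, b2⟩ hab
    rcases Prod.mk_covBy_mk_iff.1 hab with ⟨h1, rfl⟩ | ⟨h2, rfl⟩
    · by_cases hsp : a1 = ⊥ ∧ b1 = ⊤
      · obtain ⟨rfl, rfl⟩ := hsp
        have h1' : (⊥ : P₁) ≠ ⊤ := h1.lt.ne
        have hr1 : rk₁ ⊤ = 1 := by rw [h1c ⊥ ⊤ h1, h10]
        have hq : rkQ a2 ≤ rkQ ⊤ := rank_mono hQc le_top
        show f (glueEmb₁ ⊤) a2 = f (glueEmb₁ ⊥) a2 ∨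
          f (glueEmb₁ ⊤) a2 = f (glueEmb₁ ⊥) a2 + 1
        rw [glueEmb₁_bot, glueEmb₁_top h1', hb, htop]
        omega
      · rcases M1 (P₂ := P₂) h1 with h | h
        · exact absurd h hsp
        · exact hc (glueEmb₁ a1, a2) (glueEmb₁ b1, a2)
            (Prod.mk_covBy_mk_iff.2 (Or.inl ⟨h, rfl⟩))
    · exact hc (glueEmb₁ a1, a2) (glueEmb₁ a1, b2)
        (Prod.mk_covBy_mk_iff.2 (Or.inr ⟨h2, rfl⟩))

private lemma restrict₂ {rk₁ : P₁ → ℕ} {rk₂ : P₂ → ℕ} {rkQ : Q → ℕ}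
    (h20 : rk₂ ⊥ = 0) (h2c : ∀ x y : P₂, x ⋖ y → rk₂ y = rk₂ x + 1)
    (hQ0 : rkQ ⊥ = 0) (hQc : ∀ x y : Q, x ⋖ y → rkQ y = rkQ x + 1)
    (hge₂ : rkQ ⊤ ≤ rk₂ ⊤) (heq : rk₁ ⊤ = rk₂ ⊤)
    {f : GlueSum P₁ P₂ → Q → ℕ} (hf : IsQuilt (glueRank rk₁ rk₂) rkQ f) :
    IsQuilt rk₂ rkQ (fun x y => f (glueEmb₂ x) y) := by
  have htop : ∀ y, f ⊤ y = rkQ y :=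
    quilt_top hQ0 hQc (show rkQ ⊤ ≤ glueRank rk₁ rk₂ ⊤ from le_trans hge₂ (le_of_eq heq.symm)) hf
  obtain ⟨hb, hb2, ht, hc⟩ := hf
  refine ⟨fun y => by show f (glueEmb₂ ⊥) y = 0; rw [glueEmb₂_bot]; exact hb y, fun x => hb2 _, ?_, ?_⟩
  · by_cases hbt : (⊥ : P₂) = ⊤
    · show f (glueEmb₂ ⊤) ⊤ = min (rk₂ ⊤) (rkQ ⊤)
      rw [← hbt, glueEmb₂_bot, hb, h20]
      simp
    · show f (glueEmb₂ ⊤) ⊤ = min (rk₂ ⊤) (rkQ ⊤)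
      rw [glueEmb₂_top hbt, ← heq]
      exact ht
  · rintro ⟨a1, a2⟩ ⟨b1, b2⟩ hab
    rcases Prod.mk_covBy_mk_iff.1 hab with ⟨h1, rfl⟩ | ⟨h2, rfl⟩
    · by_cases hsp : a1 = ⊥ ∧ b1 = ⊤
      · obtain ⟨rfl, rfl⟩ := hsp
        have h1' : (⊥ : P₂) ≠ ⊤ := h1.lt.ne
        have hr1 : rk₂ ⊤ = 1 := by rw [h2c ⊥ ⊤ h1, h20]
        have hq : rkQ a2 ≤ rkQ ⊤ := rank_mono hQc le_top
        show f (glueEmb₂ ⊤) a2 = f (glueEmb₂ ⊥) a2 ∨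
          f (glueEmb₂ ⊤) a2 = f (glueEmb₂ ⊥) a2 + 1
        rw [glueEmb₂_bot, glueEmb₂_top h1', hb, htop]
        omega
      · rcases M2 (P₁ := P₁) h1 with h | h
        · exact absurd h hsp
        · exact hc (glueEmb₂ a1, a2) (glueEmb₂ b1, a2)
            (Prod.mk_covBy_mk_iff.2 (Or.inl ⟨h, rfl⟩))
    · exact hc (glueEmb₂ a1, a2) (glueEmb₂ a1, b2)
        (Prod.mk_covBy_mk_iff.2 (Or.inr ⟨h2, rfl⟩))

private lemma glueF_isQuilt {rk₁ : P₁ → ℕ} {rk₂ : P₂ → ℕ} {rkQ : Q → ℕ}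
    (h10 : rk₁ ⊥ = 0) (h1c : ∀ x y : P₁, x ⋖ y → rk₁ y = rk₁ x + 1)
    (hQ0 : rkQ ⊥ = 0) (hQc : ∀ x y : Q, x ⋖ y → rkQ y = rkQ x + 1)
    (heq : rk₁ ⊤ = rk₂ ⊤) (hge : rkQ ⊤ ≤ rk₁ ⊤)
    {f₁ : P₁ → Q → ℕ} {f₂ : P₂ → Q → ℕ}
    (hf₁ : IsQuilt rk₁ rkQ f₁) (hf₂ : IsQuilt rk₂ rkQ f₂) :
    IsQuilt (glueRank rk₁ rk₂) rkQ (glueF rkQ f₁ f₂) := by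
  have htop₁ : ∀ y, f₁ ⊤ y = rkQ y := quilt_top hQ0 hQc hge hf₁
  have htop₂ : ∀ y, f₂ ⊤ y = rkQ y := quilt_top hQ0 hQc (le_trans hge (le_of_eq heq)) hf₂
  obtain ⟨h1b, h1b2, h1t, h1cv⟩ := hf₁
  obtain ⟨h2b, h2b2, h2t, h2cv⟩ := hf₂
  refine ⟨fun y => rfl, ?_, ?_, ?_⟩
  · intro x
    rcases shapeW x with rfl | rfl | ⟨s, rfl⟩ | ⟨s, rfl⟩
    · rfl
    · exact hQ0
    · exact h1b2 s.1
    · exact h2b2 s.1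
  · show rkQ ⊤ = min (rk₁ ⊤) (rkQ ⊤)
    omega
  · rintro ⟨a, qa⟩ ⟨b, qb⟩ hab
    rcases Prod.mk_covBy_mk_iff.1 hab with ⟨h1, rfl⟩ | ⟨h2, rfl⟩
    · rcases shapeW a with rfl | rfl | ⟨s, rfl⟩ | ⟨s, rfl⟩ <;>
        rcases shapeW b with rfl | rfl | ⟨t, rfl⟩ | ⟨t, rfl⟩
      · exact absurd h1.lt (lt_irrefl _)
      · have hall := R4 h1
        have hr1 := quilt_rank_le_one h10 h1c hall
        have hq : rkQ qa ≤ rkQ ⊤ := rank_mono hQc le_top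
        show rkQ qa = 0 ∨ rkQ qa = 0 + 1
        omega
      · have hcv := R1 h1
        have := h1cv (⊥, qa) (t.1, qa) (Prod.mk_covBy_mk_iff.2 (Or.inl ⟨hcv, rfl⟩))
        have hb0 := h1b qa
        show f₁ t.1 qa = 0 ∨ f₁ t.1 qa = 0 + 1
        dsimp only at this
        omega
      · have hcv := R1r h1
        have := h2cv (⊥, qa) (t.1, qa) (Prod.mk_covBy_mk_iff.2 (Or.inl ⟨hcv, rfl⟩))
        have hb0 := h2b qa
        show f₂ t.1 qa = 0 ∨ f₂ t.1 qa = 0 + 1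
        dsimp only at this
        omega
      · exact absurd h1.lt not_lt_bot
      · exact absurd h1.lt lt_simp6
      · exact absurd h1.lt (lt_simp5 t)
      · exact absurd h1.lt (lt_simp5r t)
      · exact absurd h1.lt not_lt_bot
      · have hcv := R3 h1
        have := h1cv (s.1, qa) (⊤, qa) (Prod.mk_covBy_mk_iff.2 (Or.inl ⟨hcv, rfl⟩))
        have he := htop₁ qa
        show rkQ qa = f₁ s.1 qa ∨ rkQ qa = f₁ s.1 qa + 1
        dsimp only at this
        omega
      · have hcv := R2 h1
        exact h1cv (s.1, qa) (t.1, qa) (Prod.mk_covBy_mk_iff.2 (Or.inl ⟨hcv, rfl⟩))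
      · exact absurd h1.lt (lt_simp2 s t)
      · exact absurd h1.lt not_lt_bot
      · have hcv := R3r h1
        have := h2cv (s.1, qa) (⊤, qa) (Prod.mk_covBy_mk_iff.2 (Or.inl ⟨hcv, rfl⟩))
        have he := htop₂ qa
        show rkQ qa = f₂ s.1 qa ∨ rkQ qa = f₂ s.1 qa + 1
        dsimp only at this
        omega
      · exact absurd h1.lt (lt_simp2' t s)
      · have hcv := R2r h1
        exact h2cv (s.1, qa) (t.1, qa) (Prod.mk_covBy_mk_iff.2 (Or.inl ⟨hcv, rfl⟩))
    · rcases shapeW a with rfl | rfl | ⟨s, rfl⟩ | ⟨s, rfl⟩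
      · exact Or.inl rfl
      · exact Or.inr (show rkQ qb = rkQ qa + 1 from hQc _ _ h2)
      · exact h1cv (s.1, qa) (s.1, qb) (Prod.mk_covBy_mk_iff.2 (Or.inr ⟨h2, rfl⟩))
      · exact h2cv (s.1, qa) (s.1, qb) (Prod.mk_covBy_mk_iff.2 (Or.inr ⟨h2, rfl⟩))

end GlueMain



/-- If `rank P₁ = rank P₂ ≥ rank Q`, then the restriction map
`f ↦ (f|_{P₁ × Q}, f|_{P₂ × Q})` is a lattice isomorphism from `Quilts(P₁ + P₂, Q)` to
`Quilts(P₁, Q) × Quilts(P₂, Q)`: it is a bijection between the quilt sets which preserves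
and reflects the pointwise order. -/
theorem quilts_of_glued_sum
    {P₁ P₂ Q : Type*}
    [Fintype P₁] [PartialOrder P₁] [BoundedOrder P₁]
    [Fintype P₂] [PartialOrder P₂] [BoundedOrder P₂]
    [Fintype Q] [PartialOrder Q] [BoundedOrder Q]
    (rk₁ : P₁ → ℕ) (rk₂ : P₂ → ℕ) (rkQ : Q → ℕ)
    (h10 : rk₁ ⊥ = 0) (h1c : ∀ x y : P₁, x ⋖ y → rk₁ y = rk₁ x + 1)
    (h20 : rk₂ ⊥ = 0) (h2c : ∀ x y : P₂, x ⋖ y → rk₂ y = rk₂ x + 1)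
    (hQ0 : rkQ ⊥ = 0) (hQc : ∀ x y : Q, x ⋖ y → rkQ y = rkQ x + 1)
    (heq : rk₁ ⊤ = rk₂ ⊤) (hge : rkQ ⊤ ≤ rk₁ ⊤) :
    Set.BijOn
      (fun f : GlueSum P₁ P₂ → Q → ℕ =>
        ((fun x y => f (glueEmb₁ x) y), (fun x y => f (glueEmb₂ x) y)))
      {f | IsQuilt (glueRank rk₁ rk₂) rkQ f}
      {p : (P₁ → Q → ℕ) × (P₂ → Q → ℕ) | IsQuilt rk₁ rkQ p.1 ∧ IsQuilt rk₂ rkQ p.2} ∧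
    (∀ f g : GlueSum P₁ P₂ → Q → ℕ,
      IsQuilt (glueRank rk₁ rk₂) rkQ f → IsQuilt (glueRank rk₁ rk₂) rkQ g →
      ((∀ (a : GlueSum P₁ P₂) (y : Q), f a y ≤ g a y) ↔
        ((∀ (x : P₁) (y : Q), f (glueEmb₁ x) y ≤ g (glueEmb₁ x) y) ∧
         (∀ (x : P₂) (y : Q), f (glueEmb₂ x) y ≤ g (glueEmb₂ x) y)))) := by
  have hge₂ : rkQ ⊤ ≤ rk₂ ⊤ := le_trans hge (le_of_eq heq)
  have htopG : ∀ f : GlueSum P₁ P₂ → Q → ℕ, IsQuilt (glueRank rk₁ rk₂) rkQ f →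
      ∀ y, f ⊤ y = rkQ y :=
    fun f hf => quilt_top hQ0 hQc (show rkQ ⊤ ≤ glueRank rk₁ rk₂ ⊤ from hge) hf
  constructor
  · refine ⟨?_, ?_, ?_⟩
    · intro f hf
      exact ⟨restrict₁ h10 h1c hQ0 hQc hge hf, restrict₂ h20 h2c hQ0 hQc hge₂ heq hf⟩
    · intro f hf g hg hfg
      simp only [Set.mem_setOf_eq] at hf hg
      have h1 : (fun (x : P₁) (y : Q) => f (glueEmb₁ x) y) = fun x y => g (glueEmb₁ x) y :=
        congrArg Prod.fst hfg
      have h2 : (fun (x : P₂) (y : Q) => f (glueEmb₂ x) y) = fun x y => g (glueEmb₂ x) y :=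
        congrArg Prod.snd hfg
      funext a y
      rcases shapeW a with rfl | rfl | ⟨s, rfl⟩ | ⟨s, rfl⟩
      · rw [hf.1, hg.1]
      · rw [htopG f hf, htopG g hg]
      · have he : (glueEmb₁ s.1 : GlueSum P₁ P₂) = jl s := glueEmb₁_mid s.2.1 s.2.2
        rw [← he]
        exact congrFun (congrFun h1 s.1) y
      · have he : (glueEmb₂ s.1 : GlueSum P₁ P₂) = jr s := glueEmb₂_mid s.2.1 s.2.2
        rw [← he]
        exact congrFun (congrFun h2 s.1) y
    · rintro ⟨f₁, f₂⟩ hp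
      simp only [Set.mem_setOf_eq] at hp
      obtain ⟨hf₁, hf₂⟩ := hp
      have htop₁ := quilt_top hQ0 hQc hge hf₁
      have htop₂ := quilt_top hQ0 hQc hge₂ hf₂
      refine ⟨glueF rkQ f₁ f₂, glueF_isQuilt h10 h1c hQ0 hQc heq hge hf₁ hf₂, ?_⟩
      refine Prod.ext ?_ ?_
      · funext x y
        show glueF rkQ f₁ f₂ (glueEmb₁ x) y = f₁ x y
        by_cases hx0 : x = ⊥
        · subst hx0; rw [glueEmb₁_bot]; exact (hf₁.1 y).symm
        by_cases hx1 : x = ⊤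
        · subst hx1
          by_cases hbt : (⊥ : P₁) = ⊤
          · rw [← hbt, glueEmb₁_bot]
            exact (hf₁.1 y).symm
          · rw [glueEmb₁_top hbt]
            exact (htop₁ y).symm
        · rw [glueEmb₁_mid hx0 hx1]; rfl
      · funext x y
        show glueF rkQ f₁ f₂ (glueEmb₂ x) y = f₂ x y
        by_cases hx0 : x = ⊥
        · subst hx0; rw [glueEmb₂_bot]; exact (hf₂.1 y).symm
        by_cases hx1 : x = ⊤
        · subst hx1
          by_cases hbt : (⊥ : P₂) = ⊤
          · rw [← hbt, glueEmb₂_bot]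
            exact (hf₂.1 y).symm
          · rw [glueEmb₂_top hbt]
            exact (htop₂ y).symm
        · rw [glueEmb₂_mid hx0 hx1]; rfl
  · intro f g hf hg
    constructor
    · intro h
      exact ⟨fun x y => h _ y, fun x y => h _ y⟩
    · rintro ⟨hl, hr⟩ a y
      rcases shapeW a with rfl | rfl | ⟨s, rfl⟩ | ⟨s, rfl⟩
      · rw [hf.1, hg.1]
      · rw [htopG f hf, htopG g hg]
      · have he : (glueEmb₁ s.1 : GlueSum P₁ P₂) = jl s := glueEmb₁_mid s.2.1 s.2.2
        rw [← he]
        exact hl s.1 y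
      · have he : (glueEmb₂ s.1 : GlueSum P₁ P₂) = jr s := glueEmb₂_mid s.2.1 s.2.2
        rw [← he]
        exact hr s.1 y
end

section
/- Suppose ψ : Q' → Q is surjective and satisfies: whenever x ⋖ y in Q', either ψ(x) = ψ(y) or ψ(x) ⋖ ψ(y). If rank P ≤ rank Q, then the map Ψ defined by Ψ(f)(x,y') = f(x, ψ(y')) is an injective lattice homomorphism from Quilts(P,Q) to Quilts(P,Q'). -/
/-- Suppose `ψ : Q' → Q` is surjective and sends each cover relation of `Q'` either to an
equality or to a cover relation of `Q`.  If `rank P ≤ rank Q`, then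
`Ψ(f)(x, y') = f(x, ψ y')` maps quilts of type `(P, Q)` to quilts of type `(P, Q')`, and
`Ψ` is an injective lattice homomorphism: injective on quilts, preserving and reflecting
the pointwise order (and hence the pointwise meets and joins). -/
theorem quilt_pullback
    {P Q Q' : Type*} [Fintype P] [PartialOrder P] [BoundedOrder P]
    [Fintype Q] [PartialOrder Q] [BoundedOrder Q]
    [Fintype Q'] [PartialOrder Q'] [BoundedOrder Q']
    (rkP : P → ℕ) (rkQ : Q → ℕ) (rkQ' : Q' → ℕ)
    (hP0 : rkP ⊥ = 0) (hPcov : ∀ x y : P, x ⋖ y → rkP y = rkP x + 1)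
    (hQ0 : rkQ ⊥ = 0) (hQcov : ∀ x y : Q, x ⋖ y → rkQ y = rkQ x + 1)
    (hQ'0 : rkQ' ⊥ = 0) (hQ'cov : ∀ x y : Q', x ⋖ y → rkQ' y = rkQ' x + 1)
    (hPQ : rkP ⊤ ≤ rkQ ⊤)
    (ψ : Q' → Q) (hsurj : Function.Surjective ψ)
    (hcov : ∀ x y : Q', x ⋖ y → ψ x = ψ y ∨ ψ x ⋖ ψ y) :
    (∀ f : P → Q → ℕ, IsQuilt rkP rkQ f →
      IsQuilt rkP rkQ' (fun x y' => f x (ψ y'))) ∧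
    Set.InjOn (fun (f : P → Q → ℕ) => fun (x : P) (y' : Q') => f x (ψ y'))
      {f | IsQuilt rkP rkQ f} ∧
    (∀ f g : P → Q → ℕ, IsQuilt rkP rkQ f → IsQuilt rkP rkQ g →
      ((∀ (x : P) (y : Q), f x y ≤ g x y) ↔
        (∀ (x : P) (y' : Q'), f x (ψ y') ≤ g x (ψ y')))) := by
  -- ψ is monotone
  have hmono : Monotone ψ := by
    intro x y hxy
    induction y using WellFoundedLT.induction with
    | _ y ih =>
      rcases eq_or_lt_of_le hxy with rfl | hlt
      · exact le_rfl
      · obtain ⟨z, hxz, hzy⟩ := exists_le_covBy_of_lt hlt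
        have h1 := ih z hzy.lt hxz
        rcases hcov z y hzy with h | h
        · exact h ▸ h1
        · exact h1.trans h.le
  have hbot : ψ ⊥ = ⊥ := by
    obtain ⟨z, hz⟩ := hsurj ⊥
    exact le_bot_iff.mp (hz ▸ hmono bot_le)
  have htop : ψ ⊤ = ⊤ := by
    obtain ⟨z, hz⟩ := hsurj ⊤
    exact top_le_iff.mp (hz ▸ hmono le_top)
  -- rank comparison along ψ
  have hrank : ∀ y' : Q', rkQ (ψ y') ≤ rkQ' y' := by
    intro y'
    induction y' using WellFoundedLT.induction with
    | _ y' ih =>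
      rcases eq_or_ne y' ⊥ with rfl | hne
      · rw [hbot, hQ0, hQ'0]
      · obtain ⟨z, _, hzy⟩ := exists_le_covBy_of_lt (bot_lt_iff_ne_bot.mpr hne)
        have h1 := ih z hzy.lt
        rw [hQ'cov z y' hzy]
        rcases hcov z y' hzy with h | h
        · rw [← h]; omega
        · rw [hQcov _ _ h]; omega
  have hrtop : rkQ ⊤ ≤ rkQ' ⊤ := htop ▸ hrank ⊤
  refine ⟨?_, ?_, ?_⟩
  · rintro f ⟨h1, h2, h3, h4⟩
    refine ⟨fun y' => h1 (ψ y'), fun x => by show f x (ψ ⊥) = 0; rw [hbot]; exact h2 x, ?_, ?_⟩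
    · show f ⊤ (ψ ⊤) = min (rkP ⊤) (rkQ' ⊤)
      rw [htop, h3, min_eq_left hPQ, min_eq_left (hPQ.trans hrtop)]
    · rintro ⟨a, b'⟩ ⟨c, d'⟩ hc
      rcases Prod.mk_covBy_mk_iff.mp hc with ⟨hac, rfl⟩ | ⟨hbd, rfl⟩
      · exact h4 (a, ψ b') (c, ψ b') (Prod.mk_covBy_mk_iff_left.mpr hac)
      · rcases hcov _ _ hbd with h | h
        · simp [h]
        · exact h4 (a, ψ b') (a, ψ d') (Prod.mk_covBy_mk_iff_right.mpr h)
  · intro f _ g _ hfg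
    funext x y
    obtain ⟨y', rfl⟩ := hsurj y
    exact congrFun (congrFun hfg x) y'
  · intro f g _ _
    constructor
    · intro h x y'; exact h x (ψ y')
    · intro h x y
      obtain ⟨y', rfl⟩ := hsurj y
      exact h x y'
end

section
/- Let f be a quilt of type (P, C_n). For x ∈ P let J_f(x) = { i ∈ {1,...,n} : f(x,i) = f(x,i−1) + 1 } be the set of jumps. If x ⋖ y in P, then writing J_f(x) = {s_1 < ... < s_p} and J_f(y) = {t_1 < ... < t_q}, either q = p and t_1 ≤ s_1 ≤ t_2 ≤ s_2 ≤ ... ≤ t_q ≤ s_q, or q = p + 1 and t_1 ≤ s_1 ≤ t_2 ≤ ... ≤ s_p ≤ t_q (the sets interlace). -/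
/-- A quilt of type `(P, C_n)` where `C_n = {0, 1, …, n}` is the chain of rank `n`,
written out with the chain coordinate as a natural number: `f(x, i)` is constrained for
`0 ≤ i ≤ n`. -/
def IsChainQuilt {P : Type*} [PartialOrder P] [BoundedOrder P] (rkP : P → ℕ) (n : ℕ)
    (f : P → ℕ → ℕ) : Prop :=
  (∀ i, f ⊥ i = 0) ∧
  (∀ x, f x 0 = 0) ∧
  f ⊤ n = min (rkP ⊤) n ∧
  (∀ (x : P) (i : ℕ), i < n → f x (i + 1) = f x i ∨ f x (i + 1) = f x i + 1) ∧
  (∀ (x y : P) (i : ℕ), i ≤ n → x ⋖ y → f y i = f x i ∨ f y i = f x i + 1)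

/-- The set of jumps `J_f(x) = { i ∈ {1,…,n} : f(x, i) = f(x, i-1) + 1 }`. -/
def jumpSet {P : Type*} (n : ℕ) (f : P → ℕ → ℕ) (x : P) : Finset ℕ :=
  (Finset.Icc 1 n).filter fun i => f x i = f x (i - 1) + 1

lemma filter_length_iff : ∀ (l : List ℕ), l.Pairwise (· ≤ ·) → ∀ (i m : ℕ), i < l.length →
    (l.getD i 0 ≤ m ↔ i + 1 ≤ (l.filter (· ≤ m)).length)
  | [], _, i, m, h => absurd h (by simp)
  | a :: t, hs, 0, m, h => by
      simp only [List.getD_cons_zero]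
      constructor
      · intro ham
        simp [List.filter_cons, ham]
      · intro hlen
        by_contra ham
        push_neg at ham
        have hnil : (a :: t).filter (· ≤ m) = [] := by
          apply List.filter_eq_nil_iff.mpr
          intro b hb
          have : a ≤ b := by
            rcases List.mem_cons.mp hb with rfl | hb
            · exact le_rfl
            · exact (List.pairwise_cons.mp hs).1 b hb
          simp only [decide_eq_true_eq]
          omega
        rw [hnil] at hlen; simp at hlen
  | a :: t, hs, i+1, m, h => by
      have ht : t.Pairwise (· ≤ ·) := (List.pairwise_cons.mp hs).2
      have hi : i < t.length := Nat.lt_of_succ_lt_succ h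
      have IH := filter_length_iff t ht i m hi
      simp only [List.getD_cons_succ]
      constructor
      · intro hgm
        have hag : a ≤ t.getD i 0 := by
          rw [List.getD_eq_getElem _ _ hi]
          exact (List.pairwise_cons.mp hs).1 _ (List.getElem_mem hi)
        have ham : a ≤ m := le_trans hag hgm
        rw [List.filter_cons_of_pos (by simpa using ham)]
        simpa using IH.mp hgm
      · intro hlen
        rw [List.filter_cons] at hlen
        by_cases ham : a ≤ m
        · rw [if_pos (by simpa using ham), List.length_cons] at hlen
          exact IH.mpr (by omega)
        · rw [if_neg (by simpa using ham)] at hlen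
          exact IH.mpr (by omega)

lemma finset_filter_card_eq (S : Finset ℕ) (m : ℕ) :
    (S.filter (· ≤ m)).card = ((S.sort (· ≤ ·)).filter (· ≤ m)).length := by
  have h1 : (↑(S.sort (· ≤ ·)) : Multiset ℕ) = S.val := Finset.sort_eq _ _
  have h2 : (S.filter (· ≤ m)).val = Multiset.filter (· ≤ m) (↑(S.sort (· ≤ ·)) : Multiset ℕ) := by
    rw [h1]; rfl
  have h3 := congrArg Multiset.card h2
  simp only [Multiset.filter_coe, Multiset.coe_card] at h3
  exact h3

lemma sort_getD_le_iff (S : Finset ℕ) {i : ℕ} (hi : i < S.card) (m : ℕ) :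
    ((S.sort (· ≤ ·)).getD i 0 ≤ m ↔ i + 1 ≤ (S.filter (· ≤ m)).card) := by
  rw [finset_filter_card_eq]
  exact filter_length_iff _ (Finset.pairwise_sort _ _) i m (by rwa [Finset.length_sort])

lemma sort_getD_mem (S : Finset ℕ) {i : ℕ} (h : i < S.card) : (S.sort (· ≤ ·)).getD i 0 ∈ S := by
  have hl : i < (S.sort (· ≤ ·)).length := by rwa [Finset.length_sort]
  rw [List.getD_eq_getElem _ _ hl]
  exact (Finset.mem_sort _).mp (List.getElem_mem hl)

lemma card_filter_succ (S : Finset ℕ) (i : ℕ) :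
    (S.filter (· ≤ i + 1)).card = (S.filter (· ≤ i)).card + (if i + 1 ∈ S then 1 else 0) := by
  have hsplit : S.filter (· ≤ i + 1) = S.filter (· ≤ i) ∪ S.filter (· = i + 1) := by
    ext a
    simp only [Finset.mem_union, Finset.mem_filter]
    constructor
    · rintro ⟨hS, ha⟩
      rcases Nat.lt_or_ge a (i+1) with h | h
      · exact Or.inl ⟨hS, by omega⟩
      · exact Or.inr ⟨hS, by omega⟩
    · rintro (⟨hS, ha⟩ | ⟨hS, ha⟩) <;> exact ⟨hS, by omega⟩
  rw [hsplit, Finset.card_union_of_disjoint, Finset.filter_eq']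
  · split <;> simp
  · rw [Finset.disjoint_filter]
    rintro a _ ha rfl
    omega

lemma jump_mem {P : Type*} {n : ℕ} {f : P → ℕ → ℕ} {x : P} {j : ℕ} (h : j ∈ jumpSet n f x) :
    1 ≤ j ∧ j ≤ n := by
  have := Finset.mem_filter.mp h
  exact Finset.mem_Icc.mp this.1

lemma quilt_count {P : Type*} {n : ℕ} {f : P → ℕ → ℕ}
    (h0 : ∀ x : P, f x 0 = 0)
    (hstep : ∀ (x : P) (i : ℕ), i < n → f x (i + 1) = f x i ∨ f x (i + 1) = f x i + 1)
    (x : P) : ∀ i, i ≤ n → f x i = ((jumpSet n f x).filter (· ≤ i)).card := by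
  intro i
  induction i with
  | zero =>
    intro _
    rw [h0]
    rw [Finset.filter_false_of_mem, Finset.card_empty]
    intro j hj
    have := (jump_mem hj).1
    omega
  | succ i IH =>
    intro hin
    have hIH := IH (by omega)
    rw [card_filter_succ]
    rcases hstep x i (by omega) with h | h
    · have hnot : i + 1 ∉ jumpSet n f x := by
        intro hmem
        have := (Finset.mem_filter.mp hmem).2
        simp only [Nat.add_sub_cancel] at this
        omega
      rw [if_neg hnot, h, hIH, Nat.add_zero]
    · have hmem : i + 1 ∈ jumpSet n f x := by
        refine Finset.mem_filter.mpr ⟨Finset.mem_Icc.mpr ⟨by omega, by omega⟩, ?_⟩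
        simpa using h
      rw [if_pos hmem, h, hIH]

lemma quilt_count_top {P : Type*} {n : ℕ} {f : P → ℕ → ℕ}
    (h0 : ∀ x : P, f x 0 = 0)
    (hstep : ∀ (x : P) (i : ℕ), i < n → f x (i + 1) = f x i ∨ f x (i + 1) = f x i + 1)
    (x : P) : f x n = (jumpSet n f x).card := by
  rw [quilt_count h0 hstep x n le_rfl]
  congr 1
  apply Finset.filter_true_of_mem
  intro j hj
  exact (jump_mem hj).2

/-- Interlacing of jump sets: if `f` is a quilt of type `(P, C_n)` and `x ⋖ y` in `P`,
then, writing `s₁ < … < s_p` and `t₁ < … < t_q` for the elements of `J_f(x)` and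
`J_f(y)`, either `q = p` or `q = p + 1`, and the interlacing inequalities
`t₁ ≤ s₁ ≤ t₂ ≤ s₂ ≤ …` hold, i.e. `tᵢ ≤ sᵢ` for all valid `i` and `sᵢ ≤ tᵢ₊₁` for all
valid `i` (indices as positions in the increasingly sorted lists). -/
theorem chainQuilt_jumps_interlace
    {P : Type*} [PartialOrder P] [BoundedOrder P] (rkP : P → ℕ) (n : ℕ)
    (f : P → ℕ → ℕ) (hf : IsChainQuilt rkP n f) {x y : P} (hxy : x ⋖ y) :
    ((jumpSet n f y).card = (jumpSet n f x).card ∨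
      (jumpSet n f y).card = (jumpSet n f x).card + 1) ∧
    (∀ i : ℕ, i < ((jumpSet n f x).sort (· ≤ ·)).length →
      ((jumpSet n f y).sort (· ≤ ·)).getD i 0 ≤ ((jumpSet n f x).sort (· ≤ ·)).getD i 0) ∧
    (∀ i : ℕ, i + 1 < ((jumpSet n f y).sort (· ≤ ·)).length →
      ((jumpSet n f x).sort (· ≤ ·)).getD i 0 ≤
        ((jumpSet n f y).sort (· ≤ ·)).getD (i + 1) 0) := by
  obtain ⟨hbot, h0, htop, hstep, hcover⟩ := hf
  have hxcard : f x n = (jumpSet n f x).card := quilt_count_top h0 hstep x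
  have hycard : f y n = (jumpSet n f y).card := quilt_count_top h0 hstep y
  have hcn := hcover x y n le_rfl hxy
  refine ⟨?_, ?_, ?_⟩
  · rw [← hxcard, ← hycard]; exact hcn
  · -- t_i ≤ s_i
    intro i hi
    rw [Finset.length_sort] at hi
    set s := ((jumpSet n f x).sort (· ≤ ·)).getD i 0 with hs
    have hsmem : s ∈ jumpSet n f x := sort_getD_mem _ hi
    have hsn : s ≤ n := (jump_mem hsmem).2
    have hfx : i + 1 ≤ f x s := by
      rw [quilt_count h0 hstep x s hsn]
      exact (sort_getD_le_iff _ hi s).mp le_rfl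
    have hfy : i + 1 ≤ f y s := by
      rcases hcover x y s hsn hxy with h | h <;> omega
    have hiq : i < (jumpSet n f y).card := by
      rw [← hycard]
      rcases hcn with h | h <;> omega
    refine (sort_getD_le_iff _ hiq s).mpr ?_
    rwa [← quilt_count h0 hstep y s hsn]
  · -- s_i ≤ t_{i+1}
    intro i hi
    rw [Finset.length_sort] at hi
    set t := ((jumpSet n f y).sort (· ≤ ·)).getD (i + 1) 0 with ht
    have htmem : t ∈ jumpSet n f y := sort_getD_mem _ hi
    have htn : t ≤ n := (jump_mem htmem).2
    have hfy : i + 2 ≤ f y t := by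
      rw [quilt_count h0 hstep y t htn]
      exact (sort_getD_le_iff _ hi t).mp le_rfl
    have hfx : i + 1 ≤ f x t := by
      rcases hcover x y t htn hxy with h | h <;> omega
    have hip : i < (jumpSet n f x).card := by
      rw [← hxcard]
      rcases hcn with h | h <;> omega
    refine (sort_getD_le_iff _ hip t).mpr ?_
    rwa [← quilt_count h0 hstep x t htn]
end

section
/- Quilts of type (A_2(i), A_2(j)) are in bijection with {0,1}-matrices of size i × j; in particular |Quilts(A_2(i), A_2(j))| = 2^{ij}, and the quilt lattice is isomorphic to the Boolean lattice B_{ij}. -/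
/-- A type carrying `j` pairwise incomparable elements (the discrete order on `Fin j`). -/
structure DiscFin (j : ℕ) where
  val : Fin j

instance {j : ℕ} : PartialOrder (DiscFin j) where
  le a b := a = b
  le_refl _ := rfl
  le_trans _ _ _ h h' := Eq.trans (α := DiscFin j) h h'
  le_antisymm _ _ h _ := h

/-- The antichain poset `A₂(j)`: a least element `⊥` of rank 0, `j` pairwise
incomparable elements of rank 1, and a greatest element `⊤` of rank 2. -/
abbrev A2 (j : ℕ) := WithBot (WithTop (DiscFin j))

/-- The rank function of `A₂(j)`. -/
def rkA2 (j : ℕ) : A2 j → ℕ :=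
  WithBot.recBotCoe 0 (WithTop.recTopCoe 2 fun _ => 1)

/-- The rank-one element of `A₂(j)` indexed by `y : Fin j`. -/
def a2mid {j : ℕ} (y : Fin j) : A2 j :=
  ((((⟨y⟩ : DiscFin j) : WithTop (DiscFin j))) : A2 j)

-- auxiliary material

lemma discfin_not_lt {j : ℕ} (a b : DiscFin j) : ¬ a < b := by
  rintro ⟨h1, h2⟩
  exact h2 h1.symm

lemma a2_bot_lt_mid {j : ℕ} (y : Fin j) : (⊥ : A2 j) < a2mid y :=
  WithBot.bot_lt_coe _

lemma a2_mid_lt_top {j : ℕ} (y : Fin j) : a2mid y < (⊤ : A2 j) := by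
  rw [show (⊤ : A2 j) = ((⊤ : WithTop (DiscFin j)) : A2 j) from rfl]
  exact WithBot.coe_lt_coe.mpr (WithTop.coe_lt_top _)

lemma a2_bot_covBy_mid {j : ℕ} (y : Fin j) : (⊥ : A2 j) ⋖ a2mid y := by
  refine ⟨a2_bot_lt_mid y, ?_⟩
  intro c hc hc2
  induction c using WithBot.recBotCoe with
  | bot => exact lt_irrefl _ hc
  | coe c =>
    rw [a2mid, WithBot.coe_lt_coe] at hc2
    induction c using WithTop.recTopCoe with
    | top => exact not_top_lt hc2
    | coe c => exact discfin_not_lt _ _ (WithTop.coe_lt_coe.mp hc2)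

lemma a2_mid_covBy_top {j : ℕ} (y : Fin j) : a2mid y ⋖ (⊤ : A2 j) := by
  refine ⟨a2_mid_lt_top y, ?_⟩
  intro c hc hc2
  induction c using WithBot.recBotCoe with
  | bot => exact (not_lt_bot hc)
  | coe c =>
    rw [a2mid, WithBot.coe_lt_coe] at hc
    induction c using WithTop.recTopCoe with
    | top => exact lt_irrefl _ hc2
    | coe c =>
      exact discfin_not_lt _ _ (WithTop.coe_lt_coe.mp hc)

/-- Characterisation of covers in `A2 j` for `j ≥ 1`. -/
lemma a2_covBy {j : ℕ} (hj : 1 ≤ j) {a b : A2 j} (h : a ⋖ b) :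
    (a = ⊥ ∧ ∃ y : Fin j, b = a2mid y) ∨ ((∃ y : Fin j, a = a2mid y) ∧ b = ⊤) := by
  induction a using WithBot.recBotCoe with
  | bot =>
    induction b using WithBot.recBotCoe with
    | bot => exact absurd h.lt (lt_irrefl _)
    | coe b =>
      induction b using WithTop.recTopCoe with
      | top =>
        exact absurd (h.2 (a2_bot_lt_mid ⟨0, hj⟩) (a2_mid_lt_top ⟨0, hj⟩)) not_false
      | coe d =>
        exact Or.inl ⟨rfl, d.val, by cases d; rfl⟩
  | coe a =>
    induction a using WithTop.recTopCoe with
    | top => exact absurd h.lt (not_top_lt)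
    | coe d =>
      induction b using WithBot.recBotCoe with
      | bot => exact absurd h.lt (by simp)
      | coe b =>
        induction b using WithTop.recTopCoe with
        | top => exact Or.inr ⟨⟨d.val, by cases d; rfl⟩, rfl⟩
        | coe e =>
          have := WithBot.coe_lt_coe.mp h.lt
          exact absurd (WithTop.coe_lt_coe.mp this) (discfin_not_lt _ _)

lemma coe_coe_eq_a2mid {j : ℕ} (d : DiscFin j) :
    ((d : WithTop (DiscFin j)) : A2 j) = a2mid d.val := by cases d; rfl

section QuiltVals

variable {i j : ℕ} {f : A2 i → A2 j → ℕ}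

lemma quilt_top_top (hq : IsQuilt (rkA2 i) (rkA2 j) f) : f ⊤ ⊤ = 2 := hq.2.2.1

lemma quilt_mid_mid (hq : IsQuilt (rkA2 i) (rkA2 j) f) (x : Fin i) (y : Fin j) :
    f (a2mid x) (a2mid y) = 0 ∨ f (a2mid x) (a2mid y) = 1 := by
  have := hq.2.2.2 (⊥, a2mid y) (a2mid x, a2mid y)
    (Prod.mk_covBy_mk_iff_left.mpr (a2_bot_covBy_mid x))
  simpa [hq.1 (a2mid y)] using this

lemma quilt_mid_top (hq : IsQuilt (rkA2 i) (rkA2 j) f) (x : Fin i) : f (a2mid x) ⊤ = 1 := by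
  have h1 := hq.2.2.2 (⊥, ⊤) (a2mid x, ⊤)
    (Prod.mk_covBy_mk_iff_left.mpr (a2_bot_covBy_mid x))
  have h2 := hq.2.2.2 (a2mid x, ⊤) (⊤, ⊤)
    (Prod.mk_covBy_mk_iff_left.mpr (a2_mid_covBy_top x))
  dsimp only at h1 h2
  simp only [hq.1 ⊤] at h1
  rw [quilt_top_top hq] at h2
  rcases h1 with h1 | h1 <;> rcases h2 with h2 | h2 <;> omega

lemma quilt_top_mid (hq : IsQuilt (rkA2 i) (rkA2 j) f) (y : Fin j) : f ⊤ (a2mid y) = 1 := by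
  have h1 := hq.2.2.2 (⊤, ⊥) (⊤, a2mid y)
    (Prod.mk_covBy_mk_iff_right.mpr (a2_bot_covBy_mid y))
  have h2 := hq.2.2.2 (⊤, a2mid y) (⊤, ⊤)
    (Prod.mk_covBy_mk_iff_right.mpr (a2_mid_covBy_top y))
  dsimp only at h1 h2
  simp only [hq.2.1 ⊤] at h1
  rw [quilt_top_top hq] at h2
  rcases h1 with h1 | h1 <;> rcases h2 with h2 | h2 <;> omega

end QuiltVals

open Classical in
/-- The quilt associated to a `{0,1}`-matrix. -/
noncomputable def mkQ {i j : ℕ} (m : Fin i → Fin j → Prop) : A2 i → A2 j → ℕ :=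
  WithBot.recBotCoe (fun _ => 0)
    (WithTop.recTopCoe
      (WithBot.recBotCoe 0 (WithTop.recTopCoe 2 fun _ => 1))
      (fun d => WithBot.recBotCoe 0
        (WithTop.recTopCoe 1 fun e => if m d.val e.val then 1 else 0)))

section MkQ

variable {i j : ℕ} (m : Fin i → Fin j → Prop)

lemma mkQ_bot_left (b : A2 j) : mkQ m ⊥ b = 0 := rfl

lemma mkQ_bot_right (a : A2 i) : mkQ m a ⊥ = 0 := by
  induction a using WithBot.recBotCoe with
  | bot => rfl
  | coe a => induction a using WithTop.recTopCoe with
    | top => rfl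
    | coe d => rfl

lemma mkQ_top_top : mkQ m ⊤ ⊤ = 2 := rfl

lemma mkQ_mid_top (x : Fin i) : mkQ m (a2mid x) ⊤ = 1 := rfl

lemma mkQ_top_mid (y : Fin j) : mkQ m ⊤ (a2mid y) = 1 := rfl

open Classical in
lemma mkQ_mid_mid (x : Fin i) (y : Fin j) :
    mkQ m (a2mid x) (a2mid y) = if m x y then 1 else 0 := rfl

lemma mkQ_isQuilt (hi : 1 ≤ i) (hj : 1 ≤ j) : IsQuilt (rkA2 i) (rkA2 j) (mkQ m) := by
  refine ⟨mkQ_bot_left m, mkQ_bot_right m, mkQ_top_top m, ?_⟩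
  rintro ⟨a1, a2⟩ ⟨b1, b2⟩ hc
  rcases Prod.mk_covBy_mk_iff.mp hc with ⟨h1, rfl⟩ | ⟨h1, rfl⟩
  · -- cover in first coordinate, second coordinate a2 fixed
    rcases a2_covBy hi h1 with ⟨rfl, x, rfl⟩ | ⟨⟨x, rfl⟩, rfl⟩ <;>
    · induction a2 using WithBot.recBotCoe with
      | bot => simp [mkQ_bot_right, mkQ_bot_left]
      | coe b => induction b using WithTop.recTopCoe with
        | top => simp [mkQ_bot_left, mkQ_mid_top, mkQ_top_top]
        | coe e =>
          obtain ⟨v⟩ := e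
          by_cases h : m x v <;>
            simp [coe_coe_eq_a2mid, mkQ_bot_left, mkQ_mid_mid, mkQ_top_mid, h]
  · rcases a2_covBy hj h1 with ⟨rfl, y, rfl⟩ | ⟨⟨y, rfl⟩, rfl⟩ <;>
    · induction a1 using WithBot.recBotCoe with
      | bot => simp [mkQ_bot_right, mkQ_bot_left]
      | coe b => induction b using WithTop.recTopCoe with
        | top => simp [mkQ_bot_right, mkQ_top_mid, mkQ_top_top]
        | coe e =>
          obtain ⟨v⟩ := e
          by_cases h : m v y <;>
            simp [coe_coe_eq_a2mid, mkQ_bot_right, mkQ_mid_mid, mkQ_mid_top, h]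

end MkQ

section Ext

variable {i j : ℕ} {f g : A2 i → A2 j → ℕ}

lemma quilt_eq_of_mid (hf : IsQuilt (rkA2 i) (rkA2 j) f) (hg : IsQuilt (rkA2 i) (rkA2 j) g)
    (h : ∀ (x : Fin i) (y : Fin j), f (a2mid x) (a2mid y) = g (a2mid x) (a2mid y)) :
    f = g := by
  funext a b
  induction a using WithBot.recBotCoe with
  | bot => rw [hf.1, hg.1]
  | coe a => induction a using WithTop.recTopCoe with
    | top =>
      rw [WithBot.coe_top]
      induction b using WithBot.recBotCoe with
      | bot => rw [hf.2.1, hg.2.1]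
      | coe b => induction b using WithTop.recTopCoe with
        | top => rw [WithBot.coe_top, quilt_top_top hf, quilt_top_top hg]
        | coe d => rw [coe_coe_eq_a2mid, quilt_top_mid hf, quilt_top_mid hg]
    | coe d =>
      rw [coe_coe_eq_a2mid]
      induction b using WithBot.recBotCoe with
      | bot => rw [hf.2.1, hg.2.1]
      | coe b => induction b using WithTop.recTopCoe with
        | top => rw [WithBot.coe_top, quilt_mid_top hf, quilt_mid_top hg]
        | coe e => rw [coe_coe_eq_a2mid]; exact h d.val e.val

lemma quilt_le_of_mid (hf : IsQuilt (rkA2 i) (rkA2 j) f) (hg : IsQuilt (rkA2 i) (rkA2 j) g)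
    (h : ∀ (x : Fin i) (y : Fin j), f (a2mid x) (a2mid y) ≤ g (a2mid x) (a2mid y)) :
    ∀ a b, f a b ≤ g a b := by
  intro a b
  induction a using WithBot.recBotCoe with
  | bot => rw [hf.1, hg.1]
  | coe a => induction a using WithTop.recTopCoe with
    | top =>
      rw [WithBot.coe_top]
      induction b using WithBot.recBotCoe with
      | bot => rw [hf.2.1, hg.2.1]
      | coe b => induction b using WithTop.recTopCoe with
        | top => rw [WithBot.coe_top, quilt_top_top hf, quilt_top_top hg]
        | coe d => rw [coe_coe_eq_a2mid, quilt_top_mid hf, quilt_top_mid hg]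
    | coe d =>
      rw [coe_coe_eq_a2mid]
      induction b using WithBot.recBotCoe with
      | bot => rw [hf.2.1, hg.2.1]
      | coe b => induction b using WithTop.recTopCoe with
        | top => rw [WithBot.coe_top, quilt_mid_top hf, quilt_mid_top hg]
        | coe e => rw [coe_coe_eq_a2mid]; exact h d.val e.val

end Ext


/-- Quilts of type `(A₂(i), A₂(j))` are in bijection with `{0,1}`-matrices of size
`i × j`, via the values at pairs of rank-one elements; this bijection is an order
isomorphism onto the Boolean lattice `B_{ij}` (realized as `Fin i → Fin j → Prop` with
the pointwise order), and in particular there are exactly `2^(i*j)` such quilts. -/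
theorem quilts_antichain_antichain (i j : ℕ) (hi : 1 ≤ i) (hj : 1 ≤ j) :
    (Function.Bijective fun f : {f : A2 i → A2 j → ℕ // IsQuilt (rkA2 i) (rkA2 j) f} =>
      fun (x : Fin i) (y : Fin j) => f.1 (a2mid x) (a2mid y) = 1) ∧
    (∀ f g : {f : A2 i → A2 j → ℕ // IsQuilt (rkA2 i) (rkA2 j) f},
      ((∀ (a : A2 i) (b : A2 j), f.1 a b ≤ g.1 a b) ↔
        (∀ (x : Fin i) (y : Fin j), f.1 (a2mid x) (a2mid y) = 1 →
          g.1 (a2mid x) (a2mid y) = 1))) ∧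
    Nat.card {f : A2 i → A2 j → ℕ // IsQuilt (rkA2 i) (rkA2 j) f} = 2 ^ (i * j) := by
  have hbij : Function.Bijective fun f : {f : A2 i → A2 j → ℕ // IsQuilt (rkA2 i) (rkA2 j) f} =>
      fun (x : Fin i) (y : Fin j) => f.1 (a2mid x) (a2mid y) = 1 := by
    constructor
    · intro f g h
      have h' : ∀ (x : Fin i) (y : Fin j),
          f.1 (a2mid x) (a2mid y) = g.1 (a2mid x) (a2mid y) := by
        intro x y
        have hpq : (f.1 (a2mid x) (a2mid y) = 1) ↔ (g.1 (a2mid x) (a2mid y) = 1) :=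
          Iff.of_eq (congrFun (congrFun h x) y)
        rcases quilt_mid_mid f.2 x y with hf | hf <;>
          rcases quilt_mid_mid g.2 x y with hg | hg
        · rw [hf, hg]
        · exact absurd (hpq.mpr hg) (by omega)
        · exact absurd (hpq.mp hf) (by omega)
        · rw [hf, hg]
      exact Subtype.ext (quilt_eq_of_mid f.2 g.2 h')
    · intro m
      refine ⟨⟨mkQ m, mkQ_isQuilt m hi hj⟩, ?_⟩
      funext x y
      apply propext
      show mkQ m (a2mid x) (a2mid y) = 1 ↔ m x y
      rw [mkQ_mid_mid]
      by_cases h : m x y <;> simp [h]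
  refine ⟨hbij, ?_, ?_⟩
  · intro f g
    constructor
    · intro h x y hx
      rcases quilt_mid_mid g.2 x y with hg | hg
      · have := h (a2mid x) (a2mid y); omega
      · exact hg
    · intro h
      apply quilt_le_of_mid f.2 g.2
      intro x y
      rcases quilt_mid_mid f.2 x y with hf | hf
      · omega
      · rw [hf, h x y hf]
  · rw [Nat.card_congr (Equiv.ofBijective _ hbij)]
    simp only [Nat.card_eq_fintype_card, Fintype.card_fun, Fintype.card_prop, Fintype.card_fin]
    rw [mul_comm, pow_mul]
end

section
/- For a finite ranked poset P of rank k with least and greatest elements, the restriction map f ↦ f restricted to P × C_{k−1} is a bijection (indeed a lattice isomorphism) from Quilts(P, C_k) to Quilts(P, C_{k−1}); consequently |Quilts(P, C_k)| = |Quilts(P, C_{k−1})|. -/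
section Aux

variable {P : Type*} [Fintype P] [PartialOrder P] [BoundedOrder P]
  (rkP : P → ℕ) (hP0 : rkP ⊥ = 0) (hPcov : ∀ x y : P, x ⋖ y → rkP y = rkP x + 1)

set_option linter.unusedSectionVars false in
include hPcov in
/-- Growth of a quilt-like function along the `P` direction. -/
lemma quilt_growth_P {n : ℕ} (f : P → Fin (n + 1) → ℕ)
    (hcov : ∀ a b : P × Fin (n + 1), a ⋖ b →
      f b.1 b.2 = f a.1 a.2 ∨ f b.1 b.2 = f a.1 a.2 + 1) :
    ∀ x y : P, x ≤ y → ∀ i, f y i + rkP x ≤ f x i + rkP y := by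
  have wf : WellFounded ((· > ·) : P → P → Prop) := wellFounded_gt
  refine fun x =>
    wf.induction (C := fun x => ∀ y, x ≤ y → ∀ i, f y i + rkP x ≤ f x i + rkP y) x ?_
  intro x IH y hxy i
  rcases hxy.lt_or_eq with hlt | rfl
  · obtain ⟨z, hxz, hzy⟩ := exists_covBy_le_of_lt hlt
    have hstep := hcov (x, i) (z, i) (Prod.mk_covBy_mk_iff.mpr (Or.inl ⟨hxz, rfl⟩))
    have hrz := hPcov x z hxz
    have hrec := IH z hxz.lt y hzy i
    dsimp only at hstep
    omega
  · omega

set_option linter.unusedSectionVars false in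
/-- Growth of a quilt-like function along the chain direction. -/
lemma quilt_growth_C {n : ℕ} (f : P → Fin (n + 1) → ℕ)
    (hcov : ∀ a b : P × Fin (n + 1), a ⋖ b →
      f b.1 b.2 = f a.1 a.2 ∨ f b.1 b.2 = f a.1 a.2 + 1) :
    ∀ (x : P) (i j : Fin (n + 1)), i ≤ j → f x j + (i : ℕ) ≤ f x i + (j : ℕ) := by
  have key : ∀ (x : P) (d : ℕ) (i j : Fin (n + 1)), (j : ℕ) = (i : ℕ) + d →
      f x j + (i : ℕ) ≤ f x i + (j : ℕ) := by
    intro x d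
    induction d with
    | zero =>
      intro i j h
      have : i = j := Fin.ext (by omega)
      subst this; omega
    | succ d IH =>
      intro i j hj
      have hjlt : (j : ℕ) < n + 1 := j.isLt
      have hi' : (i : ℕ) + d < n + 1 := by omega
      set k : Fin (n + 1) := ⟨(i : ℕ) + d, hi'⟩ with hk
      have hkj : k ⋖ j := by
        refine Fin.coe_covBy_iff.mp ?_
        have : (k : ℕ) + 1 = (j : ℕ) := by simp [hk]; omega
        exact Nat.covBy_iff_add_one_eq.mpr this
      have hstep := hcov (x, k) (x, j) (Prod.mk_covBy_mk_iff.mpr (Or.inr ⟨hkj, rfl⟩))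
      have hrec := IH i k rfl
      dsimp only at hstep
      simp only [hk] at hstep hrec ⊢
      omega
  intro x i j hij
  exact key x ((j : ℕ) - (i : ℕ)) i j (by omega)

include hP0 hPcov in
/-- The fundamental bounds on a quilt over a chain. -/
lemma quilt_bounds {n : ℕ} (f : P → Fin (n + 1) → ℕ)
    (hf : IsQuilt rkP (fun i : Fin (n + 1) => (i : ℕ)) f) :
    ∀ (x : P) (i : Fin (n + 1)), f x i ≤ rkP x ∧ f x i ≤ (i : ℕ) ∧
      min (rkP ⊤) n + (i : ℕ) + rkP x ≤ f x i + rkP ⊤ + n := by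
  obtain ⟨hbotP, hbotC, htop, hcov⟩ := hf
  have hP := quilt_growth_P rkP hPcov f hcov
  have hC := quilt_growth_C f hcov
  intro x i
  have h1 := hP ⊥ x bot_le i
  have h2 := hC x ⊥ i bot_le
  have h3 := hP x ⊤ le_top i
  have h4 := hC ⊤ i ⊤ le_top
  have hbv : ((⊥ : Fin (n + 1)) : ℕ) = 0 := rfl
  have htv : ((⊤ : Fin (n + 1)) : ℕ) = n := rfl
  have hb1 := hbotP i
  have hb2 := hbotC x
  have htt : f ⊤ ⊤ = min (rkP ⊤) n := by
    simpa [htv] using htop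
  rw [hbv] at h2
  rw [htv] at h4
  omega

end Aux

/-- For a finite ranked poset `P` of rank `k = m + 1` with least and greatest elements,
restriction (forgetting the top level of the chain) is a bijection — indeed a lattice
isomorphism, preserving and reflecting the pointwise order — from `Quilts(P, C_k)` to
`Quilts(P, C_{k-1})`; consequently `|Quilts(P, C_k)| = |Quilts(P, C_{k-1})|`.  Here
`C_n` is realized as `Fin (n + 1)` with rank function `Fin.val`. -/
theorem quilts_chain_restriction
    {P : Type*} [Fintype P] [PartialOrder P] [BoundedOrder P]
    (rkP : P → ℕ) (m : ℕ)
    (hP0 : rkP ⊥ = 0) (hPcov : ∀ x y : P, x ⋖ y → rkP y = rkP x + 1)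
    (hrk : rkP ⊤ = m + 1) :
    Set.BijOn (fun (f : P → Fin (m + 2) → ℕ) => fun (x : P) (i : Fin (m + 1)) =>
        f x i.castSucc)
      {f | IsQuilt rkP (fun i : Fin (m + 2) => (i : ℕ)) f}
      {g | IsQuilt rkP (fun i : Fin (m + 1) => (i : ℕ)) g} ∧
    (∀ f g : P → Fin (m + 2) → ℕ,
      IsQuilt rkP (fun i : Fin (m + 2) => (i : ℕ)) f →
      IsQuilt rkP (fun i : Fin (m + 2) => (i : ℕ)) g →
      ((∀ (x : P) (i : Fin (m + 2)), f x i ≤ g x i) ↔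
        (∀ (x : P) (i : Fin (m + 1)), f x i.castSucc ≤ g x i.castSucc))) ∧
    Nat.card {f : P → Fin (m + 2) → ℕ // IsQuilt rkP (fun i : Fin (m + 2) => (i : ℕ)) f} =
      Nat.card {g : P → Fin (m + 1) → ℕ // IsQuilt rkP (fun i : Fin (m + 1) => (i : ℕ)) g} := by
  -- the top column of any quilt of type (P, C_{m+1}) is forced to be the rank function
  have hforced : ∀ f : P → Fin (m + 2) → ℕ,
      IsQuilt rkP (fun i : Fin (m + 2) => (i : ℕ)) f →
      ∀ x : P, f x (Fin.last (m + 1)) = rkP x := by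
    intro f hf x
    have hb := quilt_bounds rkP hP0 hPcov f hf x (Fin.last (m + 1))
    have : ((Fin.last (m + 1) : Fin (m + 2)) : ℕ) = m + 1 := rfl
    omega
  -- restriction maps quilts to quilts
  have hmaps : ∀ f : P → Fin (m + 2) → ℕ,
      IsQuilt rkP (fun i : Fin (m + 2) => (i : ℕ)) f →
      IsQuilt rkP (fun i : Fin (m + 1) => (i : ℕ))
        (fun (x : P) (i : Fin (m + 1)) => f x i.castSucc) := by
    intro f hf
    obtain ⟨hbotP, hbotC, htop, hcov⟩ := hf
    refine ⟨fun i => hbotP _, ?_, ?_, ?_⟩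
    · intro x
      show f x ((⊥ : Fin (m + 1)).castSucc) = 0
      exact hbotC x
    · -- value at (⊤, ⊤) in the smaller quilt
      show f ⊤ ((⊤ : Fin (m + 1)).castSucc) = min (rkP ⊤) (((⊤ : Fin (m + 1)) : ℕ))
      have hb := quilt_bounds rkP hP0 hPcov f ⟨hbotP, hbotC, htop, hcov⟩ ⊤
        ((⊤ : Fin (m + 1)).castSucc)
      have hv : (((⊤ : Fin (m + 1)).castSucc : Fin (m + 2)) : ℕ) = m := rfl
      have hv2 : ((⊤ : Fin (m + 1)) : ℕ) = m := rfl
      rw [hv] at hb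
      rw [hv2]
      omega
    · rintro ⟨x, i⟩ ⟨y, j⟩ hab
      dsimp only
      rcases Prod.mk_covBy_mk_iff.mp hab with ⟨h1, h2⟩ | ⟨h1, h2⟩
      · subst h2
        exact hcov (x, i.castSucc) (y, i.castSucc)
          (Prod.mk_covBy_mk_iff.mpr (Or.inl ⟨h1, rfl⟩))
      · subst h2
        refine hcov (x, i.castSucc) (x, j.castSucc)
          (Prod.mk_covBy_mk_iff.mpr (Or.inr ⟨?_, rfl⟩))
        refine Fin.coe_covBy_iff.mp ?_
        have h3 : (i : ℕ) + 1 = (j : ℕ) :=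
          Nat.covBy_iff_add_one_eq.mp (Fin.coe_covBy_iff.mpr h1)
        exact Nat.covBy_iff_add_one_eq.mpr (by simpa using h3)
  -- injectivity on quilts
  have hinj : ∀ f g : P → Fin (m + 2) → ℕ,
      IsQuilt rkP (fun i : Fin (m + 2) => (i : ℕ)) f →
      IsQuilt rkP (fun i : Fin (m + 2) => (i : ℕ)) g →
      (∀ (x : P) (i : Fin (m + 1)), f x i.castSucc = g x i.castSucc) → f = g := by
    intro f g hf hg h
    funext x i
    induction i using Fin.lastCases with
    | last => rw [hforced f hf x, hforced g hg x]
    | cast j => exact h x j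
  -- surjectivity: extension of a quilt by the rank function
  have hsurj : ∀ g : P → Fin (m + 1) → ℕ,
      IsQuilt rkP (fun i : Fin (m + 1) => (i : ℕ)) g →
      ∃ f : P → Fin (m + 2) → ℕ, IsQuilt rkP (fun i : Fin (m + 2) => (i : ℕ)) f ∧
        (fun (x : P) (i : Fin (m + 1)) => f x i.castSucc) = g := by
    intro g hg
    obtain ⟨hbotP, hbotC, htop, hcov⟩ := hg
    have hgb := quilt_bounds rkP hP0 hPcov g ⟨hbotP, hbotC, htop, hcov⟩
    refine ⟨fun x i => if h : (i : ℕ) < m + 1 then g x ⟨(i : ℕ), h⟩ else rkP x, ?_, ?_⟩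
    · refine ⟨?_, ?_, ?_, ?_⟩
      · intro i
        by_cases h : (i : ℕ) < m + 1
        · simp only [h, dif_pos]; exact hbotP _
        · simp only [h, dif_neg, not_false_iff]; exact hP0
      · intro x
        have h : ((⊥ : Fin (m + 2)) : ℕ) < m + 1 := Nat.succ_pos m
        simp only [h, dif_pos]
        have : (⟨((⊥ : Fin (m + 2)) : ℕ), h⟩ : Fin (m + 1)) = ⊥ := rfl
        rw [this]; exact hbotC x
      · have h : ¬ (((⊤ : Fin (m + 2)) : ℕ) < m + 1) := by
          have : ((⊤ : Fin (m + 2)) : ℕ) = m + 1 := rfl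
          omega
        simp only [h, dif_neg, not_false_iff]
        have : ((⊤ : Fin (m + 2)) : ℕ) = m + 1 := rfl
        rw [this, hrk]; omega
      · rintro ⟨x, i⟩ ⟨y, j⟩ hab
        dsimp only
        rcases Prod.mk_covBy_mk_iff.mp hab with ⟨h1, h2⟩ | ⟨h1, h2⟩
        · -- P-direction cover, same chain coordinate
          subst h2
          by_cases h : (i : ℕ) < m + 1
          · simp only [h, dif_pos]
            exact hcov (x, ⟨(i : ℕ), h⟩) (y, ⟨(i : ℕ), h⟩)
              (Prod.mk_covBy_mk_iff.mpr (Or.inl ⟨h1, rfl⟩))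
          · simp only [h, dif_neg, not_false_iff]
            exact Or.inr (hPcov x y h1)
        · -- chain-direction cover, same P coordinate
          subst h2
          have hcv : (i : ℕ) + 1 = (j : ℕ) :=
            Nat.covBy_iff_add_one_eq.mp (Fin.coe_covBy_iff.mpr h1)
          have ha : (i : ℕ) < m + 1 := by have := j.isLt; omega
          by_cases hb : (j : ℕ) < m + 1
          · simp only [ha, hb, dif_pos]
            refine hcov (x, ⟨(i : ℕ), ha⟩) (x, ⟨(j : ℕ), hb⟩)
              (Prod.mk_covBy_mk_iff.mpr (Or.inr ⟨?_, rfl⟩))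
            exact Fin.coe_covBy_iff.mp (Nat.covBy_iff_add_one_eq.mpr hcv)
          · simp only [ha, hb, dif_pos, dif_neg, not_false_iff]
            -- here i = m (as a value), and rkP x is g x m or g x m + 1
            have ha2 : (i : ℕ) = m := by have := j.isLt; omega
            have hbd := hgb x ⟨(i : ℕ), ha⟩
            simp only [ha2] at hbd ⊢
            omega
    · funext x i
      have h : ((i.castSucc : Fin (m + 2)) : ℕ) < m + 1 := by
        have := i.isLt; simpa using this
      simp only [h, dif_pos]
      have hi : (⟨((i.castSucc : Fin (m + 2)) : ℕ), h⟩ : Fin (m + 1)) = i :=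
        Fin.ext (by simp)
      rw [hi]
  have hbij : Set.BijOn (fun (f : P → Fin (m + 2) → ℕ) => fun (x : P) (i : Fin (m + 1)) =>
        f x i.castSucc)
      {f | IsQuilt rkP (fun i : Fin (m + 2) => (i : ℕ)) f}
      {g | IsQuilt rkP (fun i : Fin (m + 1) => (i : ℕ)) g} := by
    refine ⟨fun f hf => hmaps f hf, ?_, ?_⟩
    · intro f hf g hg h
      exact hinj f g hf hg (fun x i => congrFun (congrFun h x) i)
    · intro g hg
      obtain ⟨f, hf, hfg⟩ := hsurj g hg
      exact ⟨f, hf, hfg⟩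
  refine ⟨hbij, ?_, ?_⟩
  · intro f g hf hg
    constructor
    · intro h x i; exact h x _
    · intro h x i
      induction i using Fin.lastCases with
      | last => rw [hforced f hf x, hforced g hg x]
      | cast j => exact h x j
  · exact Nat.card_congr (hbij.equiv _)
end
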